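/- arXiv:2003.01350 — 4 statements merged into one kernel-verified Lean document; each statement's English description precedes it below -/
import Mathlib

section
/- The random variables X_1, …, X_n are pairwise independent, and each X_k has distribution F (the mixture (1 − ℓ⁻¹)F_U + ℓ⁻¹F_V). -/
open MeasureTheory ProbabilityTheory
open scoped ENNReal

/-- Codomain family for the joint family `(M₁,…,M_m, U₁,…,U_n, V₁,…,V_n)`:
the `M`'s take values in `Fin ℓ` and the `U`'s and `V`'s take values in `ℝ`. -/
def pairwiseCod (ℓ m n : ℕ) : Fin m ⊕ (Fin n ⊕ Fin n) → Type :=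
  fun i => match i with
  | Sum.inl _ => Fin ℓ
  | Sum.inr _ => ℝ

/-- The natural measurable-space structure on each codomain. -/
def pairwiseCodMS (ℓ m n : ℕ) : ∀ i, MeasurableSpace (pairwiseCod ℓ m n i) :=
  fun i => match i with
  | Sum.inl _ => inferInstanceAs (MeasurableSpace (Fin ℓ))
  | Sum.inr _ => inferInstanceAs (MeasurableSpace ℝ)

/-- The joint family of random variables `(M₁,…,M_m, U₁,…,U_n, V₁,…,V_n)`. -/
def pairwiseJoint {Ω : Type*} {ℓ m n : ℕ} (M : Fin m → Ω → Fin ℓ) (U V : Fin n → Ω → ℝ) :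
    ∀ i, Ω → pairwiseCod ℓ m n i :=
  fun i => match i with
  | Sum.inl j => M j
  | Sum.inr (Sum.inl k) => U k
  | Sum.inr (Sum.inr k) => V k

/-- Counting functions with "copy" constraints. -/
lemma count_constraints {m ℓ : ℕ} (s : Finset (Fin m)) (r : Fin m → Fin m)
    (hr : ∀ x, r x ∉ s) :
    (Finset.univ.filter (fun v : Fin m → Fin ℓ => ∀ x ∈ s, v x = v (r x))).card
      = ℓ ^ (m - s.card) := by
  classical
  rw [← Fintype.card_subtype]
  have E : {v : Fin m → Fin ℓ // ∀ x ∈ s, v x = v (r x)} ≃ ({x : Fin m // x ∉ s} → Fin ℓ) :=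
    { toFun := fun v x => v.1 x.1
      invFun := fun w =>
        ⟨fun t => if h : t ∈ s then w ⟨r t, hr t⟩ else w ⟨t, h⟩, by
          intro x hx
          simp only [dif_pos hx, dif_neg (hr x)]⟩
      left_inv := by
        rintro ⟨v, hv⟩
        apply Subtype.ext
        funext t
        simp only
        by_cases h : t ∈ s
        · rw [dif_pos h]; exact (hv t h).symm
        · rw [dif_neg h]
      right_inv := by
        intro w
        funext x
        simp only [dif_neg x.2] }
  rw [Fintype.card_congr E, Fintype.card_fun]
  congr 1
  · exact Fintype.card_fin ℓ
  · rw [Fintype.card_subtype_compl, Fintype.card_fin, Fintype.card_coe]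

lemma count1 {m ℓ : ℕ} {i j : Fin m} (hij : i ≠ j) :
    (Finset.univ.filter (fun v : Fin m → Fin ℓ => v i = v j)).card = ℓ ^ (m - 1) := by
  classical
  have h := count_constraints (ℓ := ℓ) ({j} : Finset (Fin m)) (fun _ => i)
    (by intro x; simp [hij])
  simp only [Finset.card_singleton] at h
  rw [← h]
  congr 1
  apply Finset.filter_congr
  intro v _
  simp [eq_comm]

lemma count2 {m ℓ : ℕ} {i j i' j' : Fin m} (hij : i ≠ j) (hij' : i' ≠ j')
    (h1 : ¬(i = i' ∧ j = j')) (h2 : ¬(i = j' ∧ j = i')) :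
    (Finset.univ.filter (fun v : Fin m → Fin ℓ => v i = v j ∧ v i' = v j')).card
      = ℓ ^ (m - 2) := by
  classical
  obtain ⟨a, b, hab, hai, haj, hpair⟩ :
      ∃ a b : Fin m, a ≠ b ∧ a ≠ i ∧ a ≠ j ∧
        ∀ v : Fin m → Fin ℓ, (v i' = v j') ↔ (v a = v b) := by
    by_cases hi : i' = i ∨ i' = j
    · have hji' : j' ≠ i := by
        intro h; rcases hi with h' | h'
        · exact hij' (h'.trans h.symm)
        · exact h2 ⟨h.symm, h'.symm⟩
      have hjj' : j' ≠ j := by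
        intro h; rcases hi with h' | h'
        · exact h1 ⟨h'.symm, h.symm⟩
        · exact hij' (h'.trans h.symm)
      exact ⟨j', i', fun h => hij' h.symm, hji', hjj', fun v => eq_comm⟩
    · push_neg at hi
      exact ⟨i', j', hij', hi.1, hi.2, fun v => Iff.rfl⟩
  set b' : Fin m := if b = j then i else b with hb'
  have hja : j ≠ a := fun h => haj h.symm
  have h := count_constraints (ℓ := ℓ) ({j, a} : Finset (Fin m))
    (fun t => if t = a then b' else i) ?_
  · rw [Finset.card_insert_of_notMem (by simp [hja]), Finset.card_singleton] at h
    rw [← h]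
    congr 1
    apply Finset.filter_congr
    intro v _
    simp only [Finset.mem_insert, Finset.mem_singleton, forall_eq_or_imp, forall_eq,
      if_neg hja, eq_self_iff_true, if_true]
    rw [hpair v]
    constructor
    · rintro ⟨hvij, hvab⟩
      refine ⟨hvij.symm, ?_⟩
      show v a = v b'
      rw [hb']
      by_cases hbj : b = j
      · rw [if_pos hbj]
        rw [hvab, hbj, ← hvij]
      · rw [if_neg hbj]; exact hvab
    · rintro ⟨hvij, hvab⟩
      refine ⟨hvij.symm, ?_⟩
      have hthis : v a = v b' := hvab
      rw [hb'] at hthis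
      by_cases hbj : b = j
      · rw [if_pos hbj] at hthis
        rw [hbj]
        exact hthis.trans hvij.symm
      · rw [if_neg hbj] at hthis
        exact hthis
  · intro x
    simp only [Finset.mem_insert, Finset.mem_singleton]
    by_cases hx : x = a
    · rw [if_pos hx, hb']
      by_cases hbj : b = j
      · rw [if_pos hbj]; push_neg; exact ⟨hij, Ne.symm hai⟩
      · rw [if_neg hbj]; push_neg; exact ⟨hbj, fun h => hab h.symm⟩
    · rw [if_neg hx]; push_neg; exact ⟨hij, Ne.symm hai⟩

/-- In the construction of the paper (with `M₁,…,M_m` i.i.d. uniform on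
`{1,…,ℓ}`, `U₁,…,U_n` i.i.d. `∼ F_U`, `V₁,…,V_n` i.i.d. `∼ F_V`, the three families mutually
independent, `D_k = 1{M_i = M_j}` for the `k`-th pair `(i,j)`, and `X_k = U_k` if `D_k = 0`,
`X_k = V_k` if `D_k = 1`), the random variables `X₁,…,X_n` are pairwise independent and each
`X_k` has distribution `F = (1 - ℓ⁻¹) F_U + ℓ⁻¹ F_V`. -/
theorem statement0
    {Ω : Type*} [MeasureSpace Ω] [IsProbabilityMeasure (ℙ : Measure Ω)]
    (ℓ : ℕ) (hℓ : 2 ≤ ℓ) (m : ℕ) (hm : 2 ≤ m) (n : ℕ) (hn : n = m * (m - 1) / 2)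
    (μU μV : Measure ℝ) [IsProbabilityMeasure μU] [IsProbabilityMeasure μV]
    (hU2 : MemLp id 2 μU) (hV2 : MemLp id 2 μV)
    (F : Measure ℝ) (hF : F = (1 - (ℓ : ℝ≥0∞)⁻¹) • μU + (ℓ : ℝ≥0∞)⁻¹ • μV)
    (hσpos : 0 < variance id F)
    (M : Fin m → Ω → Fin ℓ) (U V : Fin n → Ω → ℝ)
    (hMmeas : ∀ j, Measurable (M j))
    (hUmeas : ∀ k, Measurable (U k)) (hVmeas : ∀ k, Measurable (V k))
    (hMunif : ∀ j c, ℙ {ω | M j ω = c} = (ℓ : ℝ≥0∞)⁻¹)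
    (hUlaw : ∀ k, Measure.map (U k) ℙ = μU) (hVlaw : ∀ k, Measure.map (V k) ℙ = μV)
    (hindep : iIndepFun (m := pairwiseCodMS ℓ m n) (pairwiseJoint M U V) ℙ)
    (e : Fin n ≃ {q : Fin m × Fin m // q.1 < q.2})
    (X : Fin n → Ω → ℝ)
    (hX : ∀ k ω, X k ω = if M (e k).1.1 ω = M (e k).1.2 ω then V k ω else U k ω) :
    (∀ k k' : Fin n, k ≠ k' → IndepFun (X k) (X k') ℙ) ∧
      ∀ k, Measure.map (X k) ℙ = F := by
  classical
  set J := pairwiseJoint M U V with hJdef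
  set L : ℝ≥0∞ := (ℓ : ℝ≥0∞) with hLdef
  have hℓ0 : ℓ ≠ 0 := by omega
  have hL0 : L ≠ 0 := by simp [hLdef, hℓ0]
  have hLtop : L ≠ ∞ := by simp [hLdef]
  -- measurability of X
  have hXmeas : ∀ k, Measurable (X k) := by
    intro k
    have hXk : X k = fun ω => if M (e k).1.1 ω = M (e k).1.2 ω then V k ω else U k ω :=
      funext (hX k)
    rw [hXk]
    have hD : MeasurableSet {ω | M (e k).1.1 ω = M (e k).1.2 ω} := by
      have hrw : {ω | M (e k).1.1 ω = M (e k).1.2 ω}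
          = ⋃ c : Fin ℓ, (M (e k).1.1 ⁻¹' {c} ∩ M (e k).1.2 ⁻¹' {c}) := by
        ext ω
        simp only [Set.mem_setOf_eq, Set.mem_iUnion, Set.mem_inter_iff, Set.mem_preimage,
          Set.mem_singleton_iff]
        constructor
        · intro h; exact ⟨M (e k).1.2 ω, h, rfl⟩
        · rintro ⟨c, h1, h2⟩; rw [h1, h2]
      rw [hrw]
      exact MeasurableSet.iUnion fun c =>
        ((hMmeas _ (measurableSet_singleton c)).inter (hMmeas _ (measurableSet_singleton c)))
    exact Measurable.ite hD (hVmeas k) (hUmeas k)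
  have hEmeas : ∀ v : Fin m → Fin ℓ, MeasurableSet (⋂ t, M t ⁻¹' {v t}) :=
    fun v => MeasurableSet.iInter fun t => hMmeas t (measurableSet_singleton (v t))
  have hlawU : ∀ k (A : Set ℝ), MeasurableSet A → ℙ (U k ⁻¹' A) = μU A := by
    intro k A hA
    rw [← hUlaw k, Measure.map_apply (hUmeas k) hA]
  have hlawV : ∀ k (A : Set ℝ), MeasurableSet A → ℙ (V k ⁻¹' A) = μV A := by
    intro k A hA
    rw [← hVlaw k, Measure.map_apply (hVmeas k) hA]
  -- cylinder computation from independence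
  have cyl : ∀ (T : Finset (Fin n ⊕ Fin n)) (As : Fin n ⊕ Fin n → Set ℝ),
      (∀ x ∈ T, MeasurableSet (As x)) → ∀ v : Fin m → Fin ℓ,
      ℙ ((⋂ t, M t ⁻¹' {v t}) ∩ ⋂ x ∈ T, (J (Sum.inr x)) ⁻¹' (As x))
        = L⁻¹ ^ m * ∏ x ∈ T, ℙ (J (Sum.inr x) ⁻¹' (As x)) := by
    intro T As hAs v
    let sets : ∀ i, Set (pairwiseCod ℓ m n i) := fun i => match i with
      | Sum.inl t => ({v t} : Set (Fin ℓ))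
      | Sum.inr x => As x
    have hI := iIndepFun_iff_measure_inter_preimage_eq_mul.mp hindep
      (Finset.univ.image Sum.inl ∪ T.image Sum.inr) (sets := sets) ?_
    · have hset : (⋂ i ∈ (Finset.univ.image Sum.inl ∪ T.image Sum.inr),
          J i ⁻¹' sets i)
          = (⋂ t, M t ⁻¹' {v t}) ∩ ⋂ x ∈ T, (J (Sum.inr x)) ⁻¹' (As x) := by
        ext ω
        simp only [Set.mem_iInter, Set.mem_inter_iff, Finset.mem_union, Finset.mem_image,
          Finset.mem_univ, true_and, Set.mem_preimage]
        constructor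
        · intro h
          constructor
          · intro t
            exact h (Sum.inl t) (Or.inl ⟨t, rfl⟩)
          · intro x hx
            exact h (Sum.inr x) (Or.inr ⟨x, hx, rfl⟩)
        · rintro ⟨h1, h2⟩ i hi
          rcases i with t | x
          · exact h1 t
          · rcases hi with ⟨t, ht⟩ | ⟨y, hy, hyx⟩
            · exact absurd ht (by simp)
            · obtain rfl : y = x := Sum.inr.inj hyx
              exact h2 y hy
      have hdisj : Disjoint (Finset.univ.image (Sum.inl : Fin m → Fin m ⊕ (Fin n ⊕ Fin n)))
          (T.image Sum.inr) := by
        rw [Finset.disjoint_left]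
        rintro i hi1 hi2
        rcases Finset.mem_image.mp hi1 with ⟨t, _, rfl⟩
        rcases Finset.mem_image.mp hi2 with ⟨y, _, hy⟩
        exact absurd hy (by simp)
      rw [← hset, hI, Finset.prod_union hdisj,
        Finset.prod_image (fun a _ b _ h => Sum.inl.inj h),
        Finset.prod_image (fun a _ b _ h => Sum.inr.inj h)]
      congr 1
      have hunif : ∀ t : Fin m, ℙ (J (Sum.inl t) ⁻¹' sets (Sum.inl t)) = L⁻¹ := by
        intro t
        exact hMunif t (v t)
      rw [Finset.prod_congr rfl (fun t _ => hunif t), Finset.prod_const, Finset.card_univ,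
        Fintype.card_fin]
    · rintro (t | x) hi
      · exact measurableSet_singleton (v t)
      · refine hAs x ?_
        rcases Finset.mem_union.mp hi with h | h
        · rcases Finset.mem_image.mp h with ⟨t, _, ht⟩
          exact absurd ht (by simp)
        · rcases Finset.mem_image.mp h with ⟨y, hy, hyx⟩
          cases hyx
          exact hy
  -- partition over the values of the M's
  have partition : ∀ C : Set Ω, MeasurableSet C →
      ℙ C = ∑ v : Fin m → Fin ℓ, ℙ ((⋂ t, M t ⁻¹' {v t}) ∩ C) := by
    intro C hC
    have hcov : C = ⋃ v : Fin m → Fin ℓ, ((⋂ t, M t ⁻¹' {v t}) ∩ C) := by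
      ext ω
      simp only [Set.mem_iUnion, Set.mem_inter_iff, Set.mem_iInter, Set.mem_preimage,
        Set.mem_singleton_iff]
      constructor
      · intro h
        exact ⟨fun t => M t ω, fun t => rfl, h⟩
      · rintro ⟨v, _, h⟩
        exact h
    have hdisj : Pairwise (Function.onFun Disjoint
        fun v : Fin m → Fin ℓ => (⋂ t, M t ⁻¹' {v t}) ∩ C) := by
      intro v v' hvv'
      rw [Function.onFun, Set.disjoint_left]
      rintro ω ⟨h1, _⟩ ⟨h2, _⟩
      apply hvv'
      funext t
      have e1 := Set.mem_iInter.mp h1 t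
      have e2 := Set.mem_iInter.mp h2 t
      simp only [Set.mem_preimage, Set.mem_singleton_iff] at e1 e2
      rw [← e1, ← e2]
    conv_lhs => rw [hcov]
    rw [measure_iUnion hdisj (fun v => (hEmeas v).inter hC), tsum_fintype]
  -- the random index picking U or V according to the value pattern
  set w : Fin n → (Fin m → Fin ℓ) → Fin n ⊕ Fin n :=
    fun k v => if v (e k).1.1 = v (e k).1.2 then Sum.inr k else Sum.inl k with hwdef
  have hXslice : ∀ (k : Fin n) (A : Set ℝ) (v : Fin m → Fin ℓ),
      (⋂ t, M t ⁻¹' {v t}) ∩ X k ⁻¹' A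
        = (⋂ t, M t ⁻¹' {v t}) ∩ (J (Sum.inr (w k v))) ⁻¹' A := by
    intro k A v
    ext ω
    simp only [Set.mem_inter_iff, Set.mem_iInter, Set.mem_preimage, Set.mem_singleton_iff]
    refine and_congr_right fun h1 => ?_
    have hXev : X k ω = J (Sum.inr (w k v)) ω := by
      rw [hX k ω, hwdef]
      simp only
      by_cases hvij : v (e k).1.1 = v (e k).1.2
      · rw [if_pos hvij, if_pos (by rw [h1, h1, hvij])]
        rfl
      · rw [if_neg hvij, if_neg (by rw [h1, h1]; exact hvij)]
        rfl
    rw [hXev]; rfl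
  have hval : ∀ (k : Fin n) (A : Set ℝ), MeasurableSet A → ∀ v : Fin m → Fin ℓ,
      ℙ ((J (Sum.inr (w k v))) ⁻¹' A)
        = if v (e k).1.1 = v (e k).1.2 then μV A else μU A := by
    intro k A hA v
    rw [hwdef]
    simp only
    by_cases hvij : v (e k).1.1 = v (e k).1.2
    · rw [if_pos hvij, if_pos hvij]
      exact hlawV k A hA
    · rw [if_neg hvij, if_neg hvij]
      exact hlawU k A hA
  -- one-variable key formula
  have key1 : ∀ (k : Fin n) (A : Set ℝ), MeasurableSet A →
      ℙ (X k ⁻¹' A) = ∑ v : Fin m → Fin ℓ,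
        L⁻¹ ^ m * (if v (e k).1.1 = v (e k).1.2 then μV A else μU A) := by
    intro k A hA
    rw [partition _ (hXmeas k hA)]
    refine Finset.sum_congr rfl fun v _ => ?_
    rw [hXslice k A v]
    have hc := cyl {w k v} (fun _ => A) (fun x _ => hA) v
    rw [Finset.set_biInter_singleton, Finset.prod_singleton] at hc
    rw [hc, hval k A hA v]
  -- two-variable key formula
  have key2 : ∀ (k k' : Fin n), k ≠ k' → ∀ (A B : Set ℝ), MeasurableSet A → MeasurableSet B →
      ℙ (X k ⁻¹' A ∩ X k' ⁻¹' B) = ∑ v : Fin m → Fin ℓ,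
        L⁻¹ ^ m * ((if v (e k).1.1 = v (e k).1.2 then μV A else μU A)
          * (if v (e k').1.1 = v (e k').1.2 then μV B else μU B)) := by
    intro k k' hkk' A B hA hB
    rw [partition _ ((hXmeas k hA).inter (hXmeas k' hB))]
    refine Finset.sum_congr rfl fun v _ => ?_
    have hww : w k v ≠ w k' v := by
      rw [hwdef]
      simp only
      by_cases h1 : v (e k).1.1 = v (e k).1.2 <;>
        by_cases h2 : v (e k').1.1 = v (e k').1.2 <;>
          simp [h1, h2, hkk']
    have hinter : (⋂ t, M t ⁻¹' {v t}) ∩ (X k ⁻¹' A ∩ X k' ⁻¹' B)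
        = (⋂ t, M t ⁻¹' {v t}) ∩ ⋂ x ∈ ({w k v, w k' v} : Finset (Fin n ⊕ Fin n)),
            (J (Sum.inr x)) ⁻¹' (if x = w k v then A else B) := by
      simp only [Finset.set_biInter_insert, Finset.set_biInter_singleton,
        Ne.symm hww, ↓reduceIte]
      have hXA := hXslice k A v
      have hXB := hXslice k' B v
      ext ω
      simp only [Set.mem_inter_iff] at *
      constructor
      · rintro ⟨hE, hXa, hXb⟩
        have h1 : ω ∈ (⋂ t, M t ⁻¹' {v t}) ∩ (J (Sum.inr (w k v))) ⁻¹' A := by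
          rw [← hXA]; exact ⟨hE, hXa⟩
        have h2 : ω ∈ (⋂ t, M t ⁻¹' {v t}) ∩ (J (Sum.inr (w k' v))) ⁻¹' B := by
          rw [← hXB]; exact ⟨hE, hXb⟩
        exact ⟨hE, h1.2, h2.2⟩
      · rintro ⟨hE, hJa, hJb⟩
        have h1 : ω ∈ (⋂ t, M t ⁻¹' {v t}) ∩ X k ⁻¹' A := by
          rw [hXA]; exact ⟨hE, hJa⟩
        have h2 : ω ∈ (⋂ t, M t ⁻¹' {v t}) ∩ X k' ⁻¹' B := by
          rw [hXB]; exact ⟨hE, hJb⟩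
        exact ⟨hE, h1.2, h2.2⟩
    rw [hinter]
    have hc := cyl ({w k v, w k' v} : Finset (Fin n ⊕ Fin n))
      (fun x => if x = w k v then A else B)
      (fun x _ => by by_cases hx : x = w k v <;> simp [hx, hA, hB]) v
    refine hc.trans ?_
    simp only [Finset.prod_insert (by simp [hww] : w k v ∉ ({w k' v} : Finset (Fin n ⊕ Fin n))),
      Finset.prod_singleton, ↓reduceIte, if_neg (Ne.symm hww), hval k A hA v, hval k' B hB v]
    -- arithmetic setup
  obtain ⟨m₂, hm₂⟩ : ∃ m', m = m' + 2 := ⟨m - 2, by omega⟩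
  set a : ℕ := ℓ ^ m₂ with hadef
  have hexp1 : m - 1 = m₂ + 1 := by omega
  have hexp2 : m - 2 = m₂ := by omega
  have hA : ∀ x : ℕ, (ℓ - 1) * x + x = ℓ * x := by
    intro x
    have h : ℓ - 1 + 1 = ℓ := by omega
    calc (ℓ - 1) * x + x = ((ℓ - 1) + 1) * x := by ring
    _ = ℓ * x := by rw [h]
  have hcard_univ : (Finset.univ : Finset (Fin m → Fin ℓ)).card = ℓ * (ℓ * a) := by
    rw [Finset.card_univ, Fintype.card_fun, Fintype.card_fin, Fintype.card_fin, hm₂, hadef]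
    ring
  have hcardP : ∀ (i j : Fin m), i ≠ j →
      (Finset.univ.filter (fun v : Fin m → Fin ℓ => v i = v j)).card = ℓ * a := by
    intro i j hij
    rw [count1 hij, hexp1, hadef, pow_succ]
    ring
  have hcardnP : ∀ (i j : Fin m), i ≠ j →
      (Finset.univ.filter (fun v : Fin m → Fin ℓ => ¬ v i = v j)).card
        = (ℓ - 1) * (ℓ * a) := by
    intro i j hij
    have hpart := Finset.card_filter_add_card_filter_not
      (s := (Finset.univ : Finset (Fin m → Fin ℓ)))
      (p := fun v : Fin m → Fin ℓ => v i = v j)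
    rw [hcardP i j hij, hcard_univ] at hpart
    have h1 := hA (ℓ * a)
    have h2 : ℓ * a + (Finset.univ.filter
        (fun v : Fin m → Fin ℓ => ¬ v i = v j)).card
        = ℓ * a + (ℓ - 1) * (ℓ * a) := by
      rw [hpart, ← h1, Nat.add_comm]
    exact Nat.add_left_cancel h2
  have hsum1 : ∀ (i j : Fin m), i ≠ j → ∀ (cT cF : ℝ≥0∞),
      ∑ v : Fin m → Fin ℓ, (if v i = v j then cT else cF)
        = ((ℓ * a : ℕ) : ℝ≥0∞) * cT + (((ℓ - 1) * (ℓ * a) : ℕ) : ℝ≥0∞) * cF := by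
    intro i j hij cT cF
    rw [Finset.sum_ite, Finset.sum_const, Finset.sum_const, hcardP i j hij,
      hcardnP i j hij, nsmul_eq_mul, nsmul_eq_mul]
  have hsum2 : ∀ (i j i' j' : Fin m), i ≠ j → i' ≠ j' →
      ¬(i = i' ∧ j = j') → ¬(i = j' ∧ j = i') → ∀ (aT aF bT bF : ℝ≥0∞),
      ∑ v : Fin m → Fin ℓ,
          (if v i = v j then aT else aF) * (if v i' = v j' then bT else bF)
        = ((a : ℕ) : ℝ≥0∞) * (aT * bT) + (((ℓ - 1) * a : ℕ) : ℝ≥0∞) * (aT * bF)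
          + (((ℓ - 1) * a : ℕ) : ℝ≥0∞) * (aF * bT)
          + (((ℓ - 1) * ((ℓ - 1) * a) : ℕ) : ℝ≥0∞) * (aF * bF) := by
    intro i j i' j' hij hij' hd1 hd2 aT aF bT bF
    have hsymm1 : ¬(i' = i ∧ j' = j) := fun ⟨u1, u2⟩ => hd1 ⟨u1.symm, u2.symm⟩
    have hsymm2 : ¬(i' = j ∧ j' = i) := fun ⟨u1, u2⟩ => hd2 ⟨u2.symm, u1.symm⟩
    have hPQ : (Finset.univ.filter
        (fun v : Fin m → Fin ℓ => v i = v j ∧ v i' = v j')).card = a := by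
      rw [count2 hij hij' hd1 hd2, hexp2]
    have hQP : (Finset.univ.filter
        (fun v : Fin m → Fin ℓ => v i' = v j' ∧ v i = v j)).card = a := by
      rw [count2 hij' hij hsymm1 hsymm2, hexp2]
    have hPnQ : (Finset.univ.filter
        (fun v : Fin m → Fin ℓ => v i = v j ∧ ¬ v i' = v j')).card = (ℓ - 1) * a := by
      have hpart := Finset.card_filter_add_card_filter_not
        (s := Finset.univ.filter (fun v : Fin m → Fin ℓ => v i = v j))
        (p := fun v : Fin m → Fin ℓ => v i' = v j')
      rw [Finset.filter_filter, Finset.filter_filter, hcardP i j hij, hPQ] at hpart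
      have h1 := hA a
      have h2 : a + (Finset.univ.filter
          (fun v : Fin m → Fin ℓ => v i = v j ∧ ¬ v i' = v j')).card
          = a + (ℓ - 1) * a := by
        rw [hpart, ← h1, Nat.add_comm]
      exact Nat.add_left_cancel h2
    have hQnP : (Finset.univ.filter
        (fun v : Fin m → Fin ℓ => v i' = v j' ∧ ¬ v i = v j)).card = (ℓ - 1) * a := by
      have hpart := Finset.card_filter_add_card_filter_not
        (s := Finset.univ.filter (fun v : Fin m → Fin ℓ => v i' = v j'))
        (p := fun v : Fin m → Fin ℓ => v i = v j)
      rw [Finset.filter_filter, Finset.filter_filter, hcardP i' j' hij', hQP] at hpart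
      have h1 := hA a
      have h2 : a + (Finset.univ.filter
          (fun v : Fin m → Fin ℓ => v i' = v j' ∧ ¬ v i = v j)).card
          = a + (ℓ - 1) * a := by
        rw [hpart, ← h1, Nat.add_comm]
      exact Nat.add_left_cancel h2
    have hnPQ : (Finset.univ.filter
        (fun v : Fin m → Fin ℓ => ¬ v i = v j ∧ v i' = v j')).card = (ℓ - 1) * a := by
      rw [← hQnP]
      congr 1
      apply Finset.filter_congr
      intro v _
      exact and_comm
    have hnPnQ : (Finset.univ.filter
        (fun v : Fin m → Fin ℓ => ¬ v i = v j ∧ ¬ v i' = v j')).card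
          = (ℓ - 1) * ((ℓ - 1) * a) := by
      have hpart := Finset.card_filter_add_card_filter_not
        (s := Finset.univ.filter (fun v : Fin m → Fin ℓ => ¬ v i = v j))
        (p := fun v : Fin m → Fin ℓ => v i' = v j')
      rw [Finset.filter_filter, Finset.filter_filter, hcardnP i j hij, hnPQ] at hpart
      have hkey : (ℓ - 1) * a + (ℓ - 1) * ((ℓ - 1) * a) = (ℓ - 1) * (ℓ * a) := by
        rw [← Nat.mul_add]
        congr 1
        rw [Nat.add_comm]
        exact hA a
      rw [← hkey] at hpart
      exact Nat.add_left_cancel hpart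
    have hpt : ∀ v : Fin m → Fin ℓ,
        (if v i = v j then aT else aF) * (if v i' = v j' then bT else bF)
          = (if v i = v j ∧ v i' = v j' then aT * bT else 0)
            + (if v i = v j ∧ ¬ v i' = v j' then aT * bF else 0)
            + (if ¬ v i = v j ∧ v i' = v j' then aF * bT else 0)
            + (if ¬ v i = v j ∧ ¬ v i' = v j' then aF * bF else 0) := by
      intro v
      by_cases h1 : v i = v j <;> by_cases h2 : v i' = v j' <;> simp [h1, h2]
    rw [Finset.sum_congr rfl fun v _ => hpt v]
    rw [Finset.sum_add_distrib, Finset.sum_add_distrib, Finset.sum_add_distrib,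
      ← Finset.sum_filter, ← Finset.sum_filter, ← Finset.sum_filter, ← Finset.sum_filter,
      Finset.sum_const, Finset.sum_const, Finset.sum_const, Finset.sum_const,
      hPQ, hPnQ, hnPQ, hnPnQ, nsmul_eq_mul, nsmul_eq_mul, nsmul_eq_mul, nsmul_eq_mul]
  -- ENNReal cast and power identities
  have hacast : ((a : ℕ) : ℝ≥0∞) = L ^ m₂ := by
    rw [hadef, Nat.cast_pow, ← hLdef]
  set tE : ℝ≥0∞ := ((ℓ - 1 : ℕ) : ℝ≥0∞) with htE
  have hcast1 : ((ℓ * a : ℕ) : ℝ≥0∞) = L * L ^ m₂ := by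
    rw [Nat.cast_mul, hacast, ← hLdef]
  have hcast2 : (((ℓ - 1) * (ℓ * a) : ℕ) : ℝ≥0∞) = tE * (L * L ^ m₂) := by
    rw [Nat.cast_mul, hcast1, ← htE]
  have hcast3 : (((ℓ - 1) * a : ℕ) : ℝ≥0∞) = tE * L ^ m₂ := by
    rw [Nat.cast_mul, hacast, ← htE]
  have hcast4 : (((ℓ - 1) * ((ℓ - 1) * a) : ℕ) : ℝ≥0∞) = tE * (tE * L ^ m₂) := by
    rw [Nat.cast_mul, hcast3, ← htE]
  have hc : L⁻¹ * L = 1 := ENNReal.inv_mul_cancel hL0 hLtop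
  have hLpow : L⁻¹ ^ m * L ^ m₂ = L⁻¹ * L⁻¹ := by
    rw [hm₂]
    calc L⁻¹ ^ (m₂ + 2) * L ^ m₂ = (L⁻¹ * L) ^ m₂ * (L⁻¹ * L⁻¹) := by
          rw [mul_pow]; ring
    _ = L⁻¹ * L⁻¹ := by rw [hc, one_pow, one_mul]
  have hco1 : L⁻¹ ^ m * ((ℓ * a : ℕ) : ℝ≥0∞) = L⁻¹ := by
    rw [hcast1]
    calc L⁻¹ ^ m * (L * L ^ m₂) = L⁻¹ ^ m * L ^ m₂ * L := by ring
    _ = L⁻¹ * L⁻¹ * L := by rw [hLpow]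
    _ = L⁻¹ := by rw [mul_assoc, hc, mul_one]
  have ht1 : tE * L⁻¹ = 1 - L⁻¹ := by
    have hcastT : tE + 1 = L := by
      rw [htE, hLdef]
      norm_cast
      omega
    have hsum : tE * L⁻¹ + L⁻¹ = 1 := by
      calc tE * L⁻¹ + L⁻¹ = (tE + 1) * L⁻¹ := by ring
      _ = L * L⁻¹ := by rw [hcastT]
      _ = 1 := ENNReal.mul_inv_cancel hL0 hLtop
    exact ENNReal.eq_sub_of_add_eq (ENNReal.inv_ne_top.mpr hL0) hsum
  have hco2 : L⁻¹ ^ m * (((ℓ - 1) * (ℓ * a) : ℕ) : ℝ≥0∞) = 1 - L⁻¹ := by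
    rw [hcast2]
    calc L⁻¹ ^ m * (tE * (L * L ^ m₂)) = tE * (L⁻¹ ^ m * L ^ m₂ * L) := by ring
    _ = tE * (L⁻¹ * L⁻¹ * L) := by rw [hLpow]
    _ = tE * L⁻¹ := by rw [mul_assoc, hc, mul_one]
    _ = 1 - L⁻¹ := ht1
  -- the marginal distribution of each X k
  have hmarg : ∀ k (A : Set ℝ), MeasurableSet A →
      ℙ (X k ⁻¹' A) = L⁻¹ * μV A + (1 - L⁻¹) * μU A := by
    intro k A hA
    have hij : (e k).1.1 ≠ (e k).1.2 := ne_of_lt (e k).2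
    rw [key1 k A hA, ← Finset.mul_sum, hsum1 _ _ hij]
    calc L⁻¹ ^ m * (((ℓ * a : ℕ) : ℝ≥0∞) * μV A
          + (((ℓ - 1) * (ℓ * a) : ℕ) : ℝ≥0∞) * μU A)
        = (L⁻¹ ^ m * ((ℓ * a : ℕ) : ℝ≥0∞)) * μV A
          + (L⁻¹ ^ m * (((ℓ - 1) * (ℓ * a) : ℕ) : ℝ≥0∞)) * μU A := by ring
    _ = L⁻¹ * μV A + (1 - L⁻¹) * μU A := by rw [hco1, hco2]
  constructor
  · -- pairwise independence
    intro k k' hkk'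
    rw [indepFun_iff_measure_inter_preimage_eq_mul]
    intro A B hA hB
    have hij : (e k).1.1 ≠ (e k).1.2 := ne_of_lt (e k).2
    have hij' : (e k').1.1 ≠ (e k').1.2 := ne_of_lt (e k').2
    have hd1 : ¬((e k).1.1 = (e k').1.1 ∧ (e k).1.2 = (e k').1.2) := by
      rintro ⟨h1, h2⟩
      apply hkk'
      apply e.injective
      apply Subtype.ext
      exact Prod.ext h1 h2
    have hd2 : ¬((e k).1.1 = (e k').1.2 ∧ (e k).1.2 = (e k').1.1) := by
      rintro ⟨h1, h2⟩
      have hlt1 := (e k).2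
      have hlt2 := (e k').2
      rw [h1, h2] at hlt1
      exact absurd hlt1 (not_lt_of_gt hlt2)
    rw [key2 k k' hkk' A B hA hB, hmarg k A hA, hmarg k' B hB, ← Finset.mul_sum,
      hsum2 _ _ _ _ hij hij' hd1 hd2, hacast, hcast3, hcast4]
    calc L⁻¹ ^ m * (L ^ m₂ * (μV A * μV B) + tE * L ^ m₂ * (μV A * μU B)
          + tE * L ^ m₂ * (μU A * μV B) + tE * (tE * L ^ m₂) * (μU A * μU B))
        = (L⁻¹ ^ m * L ^ m₂) * ((μV A + tE * μU A) * (μV B + tE * μU B)) := by ring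
    _ = (L⁻¹ * L⁻¹) * ((μV A + tE * μU A) * (μV B + tE * μU B)) := by rw [hLpow]
    _ = (L⁻¹ * μV A + tE * L⁻¹ * μU A) * (L⁻¹ * μV B + tE * L⁻¹ * μU B) := by ring
    _ = (L⁻¹ * μV A + (1 - L⁻¹) * μU A) * (L⁻¹ * μV B + (1 - L⁻¹) * μU B) := by
        rw [← ht1]
  · -- the distribution of each X k
    intro k
    refine Measure.ext fun A hA => ?_
    rw [Measure.map_apply (hXmeas k) hA, hmarg k A hA, hF]
    rw [Measure.add_apply, Measure.smul_apply, Measure.smul_apply, smul_eq_mul, smul_eq_mul]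
    ring
end

section
/- For every t ∈ ℝ, the characteristic function of S equals exp(−(1 − r²)t²/2) · exp(−i t r √((ℓ−1)/2)) · (1 − i t r √(2/(ℓ−1)))^{−(ℓ−1)/2}, where the complex power is taken with the principal branch. -/
open MeasureTheory ProbabilityTheory Set Filter
open scoped ENNReal NNReal Real Topology

noncomputable section

lemma my_cpow_ofReal_mul {r : ℝ} (hr : 0 < r) {x : ℂ} (hx : x ≠ 0) (s : ℂ) :
    ((r : ℂ) * x) ^ s = (r : ℂ) ^ s * x ^ s := by
  have hr' : (r : ℂ) ≠ 0 := Complex.ofReal_ne_zero.2 hr.ne'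
  rw [Complex.cpow_def_of_ne_zero (mul_ne_zero hr' hx), Complex.cpow_def_of_ne_zero hr',
    Complex.cpow_def_of_ne_zero hx, Complex.log_ofReal_mul hr hx, ← Complex.ofReal_log hr.le,
    add_mul, Complex.exp_add]


lemma my_integrableOn_rpow_mul_exp_neg_mul {s b : ℝ} (hs : -1 < s) (hb : 0 < b) :
    IntegrableOn (fun x : ℝ => x ^ s * Real.exp (-b * x)) (Ioi 0) := by
  refine (integrableOn_rpow_mul_exp_neg_mul_rpow hs (by norm_num : (0:ℝ) < 1) hb).congr_fun
    (fun x hx => by simp only [Real.rpow_one]) measurableSet_Ioi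

lemma my_norm_aux {x : ℝ} (hx : 0 < x) (w z : ℂ) :
    ‖(x : ℂ) ^ w * Complex.exp (-(z * x))‖ = x ^ w.re * Real.exp (-(z.re * x)) := by
  rw [norm_mul, Complex.norm_cpow_eq_rpow_re_of_pos hx, Complex.norm_exp]
  congr 2
  simp [Complex.neg_re, Complex.mul_re]

lemma my_contOn {a : ℝ} (z : ℂ) :
    ContinuousOn (fun x : ℝ => (x : ℂ) ^ ((a : ℂ) - 1) * Complex.exp (-(z * x))) (Ioi 0) := by
  apply ContinuousOn.mul
  · intro x hx
    exact ((continuousAt_cpow_const (Or.inl (by exact_mod_cast hx))).comp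
      Complex.continuous_ofReal.continuousAt).continuousWithinAt
  · exact (Complex.continuous_exp.comp (by fun_prop)).continuousOn

lemma my_gammaLaplace {a : ℝ} (ha : 0 < a) {z : ℂ} (hz : 0 < z.re) :
    ∫ x : ℝ in Ioi 0, (x : ℂ) ^ ((a : ℂ) - 1) * Complex.exp (-(z * x)) =
      Complex.Gamma a * z ^ (-(a : ℂ)) := by
  set U : Set ℂ := {w : ℂ | 0 < w.re} with hUdef
  have hUopen : IsOpen U := isOpen_lt continuous_const Complex.continuous_re
  set F : ℂ → ℂ := fun w => ∫ x : ℝ in Ioi 0, (x : ℂ) ^ ((a : ℂ) - 1) * Complex.exp (-(w * x))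
    with hF
  set G : ℂ → ℂ := fun w => Complex.Gamma a * w ^ (-(a : ℂ)) with hG
  have key : ∀ w ∈ U, DifferentiableAt ℂ F w := by
    intro z₀ hz₀
    have hc : 0 < z₀.re := hz₀
    have hε : 0 < z₀.re / 2 := by linarith
    have hbd : IntegrableOn (fun x : ℝ => x ^ a * Real.exp (-(z₀.re / 2) * x)) (Ioi 0) :=
      my_integrableOn_rpow_mul_exp_neg_mul (by linarith) hε
    have H := hasDerivAt_integral_of_dominated_loc_of_deriv_le (s := Metric.ball z₀ (z₀.re / 2)) (x₀ := z₀)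
      (F := fun w x => (x : ℂ) ^ ((a : ℂ) - 1) * Complex.exp (-(w * x)))
      (F' := fun w (x : ℝ) => (x : ℂ) ^ ((a : ℂ) - 1) * (Complex.exp (-(w * x)) * -(x:ℂ)))
      (μ := volume.restrict (Ioi 0)) (bound := fun x => x ^ a * Real.exp (-(z₀.re / 2) * x))
      (Metric.ball_mem_nhds z₀ hε) ?_ ?_ ?_ ?_ hbd ?_
    · exact H.2.differentiableAt
    · exact Eventually.of_forall fun w =>
        ((my_contOn w).aestronglyMeasurable measurableSet_Ioi)
    · -- integrability at z₀
      refine (my_integrableOn_rpow_mul_exp_neg_mul (s := a - 1) (by linarith) hc).mono'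
        ((my_contOn z₀).aestronglyMeasurable measurableSet_Ioi) ?_
      filter_upwards [ae_restrict_mem measurableSet_Ioi] with x hx
      rw [my_norm_aux hx]
      simp [neg_mul]
    · -- measurability of F' z₀
      apply ContinuousOn.aestronglyMeasurable _ measurableSet_Ioi
      refine ContinuousOn.congr ((my_contOn (a := a) z₀).mul
        (Complex.continuous_ofReal.neg.continuousOn)) (fun x hx => by simp only [Pi.mul_apply, Pi.neg_apply]; ring)
    · -- bound
      filter_upwards [ae_restrict_mem measurableSet_Ioi] with x hx w hw
      have hxpos : (0:ℝ) < x := hx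
      have hwre : z₀.re / 2 ≤ w.re := by
        have habs : |w.re - z₀.re| ≤ ‖w - z₀‖ := by
          simpa [Complex.sub_re] using Complex.abs_re_le_norm (w - z₀)
        have h2 : ‖w - z₀‖ < z₀.re / 2 := by
          simpa [Complex.dist_eq] using Metric.mem_ball.1 hw
        have h3 := abs_le.1 (habs.trans h2.le)
        linarith [h3.1]
      have : ‖(x:ℂ) ^ ((a:ℂ) - 1) * (Complex.exp (-(w * x)) * -(x:ℂ))‖
          = x ^ (a - 1) * (Real.exp (-(w.re * x)) * x) := by
        rw [show (x:ℂ) ^ ((a:ℂ) - 1) * (Complex.exp (-(w * x)) * -(x:ℂ))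
            = ((x:ℂ) ^ ((a:ℂ) - 1) * Complex.exp (-(w * x))) * -(x:ℂ) by ring,
          norm_mul, my_norm_aux hxpos, norm_neg]
        simp [Complex.sub_re, abs_of_pos hxpos, mul_assoc]
      rw [this]
      have hx1 : x ^ (a - 1) * (Real.exp (-(w.re * x)) * x) = x ^ a * Real.exp (-(w.re * x)) := by
        rw [show x ^ (a-1) * (Real.exp (-(w.re*x)) * x) = (x ^ (a-1) * x) * Real.exp (-(w.re*x)) by ring]
        congr 1
        rw [← Real.rpow_add_one hxpos.ne' (a - 1), sub_add_cancel]
      rw [hx1]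
      have : Real.exp (-(w.re * x)) ≤ Real.exp (-(z₀.re/2) * x) := by
        apply Real.exp_le_exp.2
        rw [neg_mul]
        apply neg_le_neg
        exact mul_le_mul_of_nonneg_right hwre hxpos.le
      exact mul_le_mul_of_nonneg_left this (Real.rpow_nonneg hxpos.le a)
    · -- derivative
      filter_upwards [ae_restrict_mem measurableSet_Ioi] with x hx w hw
      have h1 : HasDerivAt (fun w : ℂ => -(w * x)) (-(x:ℂ)) w := by
        simpa using (hasDerivAt_mul_const (x:ℂ) (x := w)).fun_neg
      exact (h1.cexp).const_mul _
  have hFan : AnalyticOnNhd ℂ F U :=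
    (Complex.analyticOnNhd_iff_differentiableOn hUopen).2 fun w hw => (key w hw).differentiableWithinAt
  have hGan : AnalyticOnNhd ℂ G U := by
    refine (Complex.analyticOnNhd_iff_differentiableOn hUopen).2 fun w hw => ?_
    exact ((differentiableAt_id.cpow (differentiableAt_const _)
      (Or.inl hw)).const_mul _).differentiableWithinAt
  have hreal : ∀ s : ℝ, 0 < s → F (s : ℂ) = G (s : ℂ) := by
    intro s hs
    rw [hF, hG]
    simp only
    rw [Complex.integral_cpow_mul_exp_neg_mul_Ioi (by simpa using ha) hs]
    rw [one_div, Complex.inv_cpow _ _ (by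
        rw [Complex.arg_ofReal_of_nonneg hs.le]; exact Real.pi_ne_zero.symm),
      ← Complex.cpow_neg, mul_comm]
  have hfreq : ∃ᶠ w in 𝓝[≠] (1 : ℂ), F w = G w := by
    have htend : Tendsto (fun n : ℕ => ((1 + ((n:ℝ)+1)⁻¹ : ℝ) : ℂ)) atTop (𝓝[≠] (1 : ℂ)) := by
      rw [tendsto_nhdsWithin_iff]
      constructor
      · have h1 : Tendsto (fun n : ℕ => ((n:ℝ)+1)⁻¹) atTop (𝓝 0) := by
          apply tendsto_inv_atTop_zero.comp
          exact tendsto_atTop_add_const_right _ 1 tendsto_natCast_atTop_atTop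
        have h0 : Tendsto (fun n : ℕ => (1 + ((n:ℝ)+1)⁻¹ : ℝ)) atTop (𝓝 (1 + 0)) :=
          tendsto_const_nhds.add h1
        rw [add_zero] at h0
        have h2 : Tendsto (fun n : ℕ => ((1 + ((n:ℝ)+1)⁻¹ : ℝ) : ℂ)) atTop (𝓝 ((1:ℝ):ℂ)) :=
          (Complex.continuous_ofReal.tendsto _).comp h0
        rw [Complex.ofReal_one] at h2
        exact h2
      · filter_upwards with n
        simp only [mem_compl_iff, mem_singleton_iff]
        intro h
        have : ((1 + ((n:ℝ)+1)⁻¹ : ℝ) : ℂ) = ((1:ℝ) : ℂ) := by simpa using h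
        have := Complex.ofReal_inj.1 this
        have hn : ((n:ℝ)+1)⁻¹ > 0 := by positivity
        linarith
    exact htend.frequently (Frequently.of_forall fun n => hreal _ (by positivity))
  have heq : EqOn F G U :=
    hFan.eqOn_of_preconnected_of_frequently_eq hGan
      ((convex_halfSpace_re_gt 0).isPreconnected) (by simp [hUdef]) hfreq
  exact heq hz


lemma my_integral_withDensity_ofReal {p : ℝ → ℝ} (hp : Measurable p) (hp0 : ∀ x, 0 ≤ p x)
    (g : ℝ → ℂ) :
    ∫ x, g x ∂(volume.withDensity (fun x => ENNReal.ofReal (p x))) = ∫ x, p x • g x := by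
  rw [show (fun x => ENNReal.ofReal (p x)) = (fun x => ((Real.toNNReal (p x) : ℝ≥0) : ℝ≥0∞))
      from rfl,
    integral_withDensity_eq_integral_smul hp.real_toNNReal]
  congr 1
  ext x
  rw [NNReal.smul_def, Real.coe_toNNReal _ (hp0 x)]

lemma my_gaussChar (u : ℝ) :
    ∫ x : ℝ, Complex.exp (Complex.I * u * x) ∂(gaussianReal 0 1) =
      Complex.exp (-(u : ℂ) ^ 2 / 2) := by
  rw [gaussianReal_of_var_ne_zero _ one_ne_zero]
  rw [show gaussianPDF 0 1 = fun x => ENNReal.ofReal (gaussianPDFReal 0 1 x) from rfl,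
    my_integral_withDensity_ofReal (measurable_gaussianPDFReal 0 1)
      (fun x => (gaussianPDFReal_pos 0 1 x one_ne_zero).le)]
  have hpdf : ∀ x : ℝ, gaussianPDFReal 0 1 x
      = (Real.sqrt (2 * Real.pi))⁻¹ * Real.exp (-(1/2) * x ^ 2) := by
    intro x
    simp only [gaussianPDFReal, NNReal.coe_one, mul_one, sub_zero]
    congr 1
    ring
  have h1 : ∀ x : ℝ, gaussianPDFReal 0 1 x • Complex.exp (Complex.I * u * x)
      = (Real.sqrt (2 * Real.pi))⁻¹ •
        Complex.exp ((-(1/2) : ℂ) * x ^ 2 + (Complex.I * u) * x + 0) := by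
    intro x
    rw [hpdf, mul_smul]
    congr 1
    rw [Complex.real_smul, Complex.ofReal_exp, ← Complex.exp_add]
    congr 1
    push_cast
    ring
  simp_rw [h1]
  rw [integral_smul, integral_cexp_quadratic (by norm_num : (-(1/2) : ℂ).re < 0)]
  have h2 : ((Real.pi : ℂ) / -(-(1/2))) ^ (1/2 : ℂ) = (Real.sqrt (2 * Real.pi) : ℂ) := by
    rw [show ((Real.pi : ℂ) / -(-(1/2))) = ((2 * Real.pi : ℝ) : ℂ) by push_cast; ring,
      show (1/2 : ℂ) = ((1/2 : ℝ) : ℂ) by norm_num,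
      ← Complex.ofReal_cpow (by positivity), Real.sqrt_eq_rpow]
  rw [h2, show (0 - (Complex.I * u) ^ 2 / (4 * -(1/2)) : ℂ) = -(u:ℂ)^2/2 by
    rw [mul_pow, Complex.I_sq]; ring]
  rw [Complex.real_smul]
  rw [← mul_assoc, Complex.ofReal_inv, inv_mul_cancel₀ (by
    simp only [ne_eq, Complex.ofReal_eq_zero]
    positivity), one_mul]

lemma my_gammaChar {a : ℝ} (ha : 0 < a) (s : ℝ) :
    ∫ x : ℝ, Complex.exp (Complex.I * s * x) ∂(gammaMeasure a (1/2)) =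
      (1 - 2 * Complex.I * s) ^ (-(a : ℂ)) := by
  have h2pos : (0:ℝ) < 1/2 := by norm_num
  rw [show gammaMeasure a (1/2) = volume.withDensity (gammaPDF a (1/2)) from rfl,
    show gammaPDF a (1/2) = fun x => ENNReal.ofReal (gammaPDFReal a (1/2) x) from rfl,
    my_integral_withDensity_ofReal (measurable_gammaPDFReal a (1/2))
      (gammaPDFReal_nonneg ha h2pos)]
  have hzero : ∀ x : ℝ, x ∉ Ioi (0:ℝ) → x ≠ 0 →
      gammaPDFReal a (1/2) x • Complex.exp (Complex.I * s * x) = 0 := by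
    intro x hx hx0
    have hxneg : x < 0 := lt_of_le_of_ne (by simpa using hx) hx0
    rw [gammaPDFReal, if_neg (not_le.2 hxneg), zero_smul]
  have hsplit : ∫ x : ℝ, gammaPDFReal a (1/2) x • Complex.exp (Complex.I * s * x)
      = ∫ x in Ioi 0, gammaPDFReal a (1/2) x • Complex.exp (Complex.I * s * x) := by
    rw [← integral_indicator measurableSet_Ioi]
    apply integral_congr_ae
    filter_upwards [compl_mem_ae_iff.2 (measure_singleton (0:ℝ))] with x hx
    rw [mem_compl_iff, mem_singleton_iff] at hx
    by_cases hmem : x ∈ Ioi (0:ℝ)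
    · rw [indicator_of_mem hmem]
    · rw [indicator_of_notMem hmem, hzero x hmem hx]
  rw [hsplit]
  set z : ℂ := 1/2 - Complex.I * s with hz
  have hzre : 0 < z.re := by simp [hz]
  have hkey : ∀ x ∈ Ioi (0:ℝ), gammaPDFReal a (1/2) x • Complex.exp (Complex.I * s * x)
      = (((1/2 : ℝ) ^ a / Real.Gamma a : ℝ) : ℂ) *
        ((x : ℂ) ^ ((a : ℂ) - 1) * Complex.exp (-(z * x))) := by
    intro x hx
    have hxpos : (0:ℝ) < x := hx
    rw [gammaPDFReal, if_pos hxpos.le, Complex.real_smul]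
    push_cast
    rw [Complex.ofReal_cpow hxpos.le]
    push_cast
    rw [show (-(z * (x:ℂ)) : ℂ) = -(1/2 * (x:ℂ)) + Complex.I * s * x by rw [hz]; ring,
      Complex.exp_add]
    ring
  rw [setIntegral_congr_fun measurableSet_Ioi hkey, integral_const_mul,
    my_gammaLaplace ha hzre]
  have hGa : Complex.Gamma (a:ℂ) = ((Real.Gamma a : ℝ) : ℂ) := Complex.Gamma_ofReal a
  have hGne : (Real.Gamma a) ≠ 0 := (Real.Gamma_pos_of_pos ha).ne'
  have hzf : z = ((1/2 : ℝ) : ℂ) * (1 - 2 * Complex.I * s) := by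
    rw [hz]; push_cast; ring
  have hne : (1 - 2 * Complex.I * s : ℂ) ≠ 0 := by
    intro h
    have h0 : z = 0 := by rw [hzf, h, mul_zero]
    rw [h0] at hzre
    simp at hzre
  rw [hzf, my_cpow_ofReal_mul (by norm_num) hne]
  rw [show ((1/2:ℝ):ℂ) ^ (-(a:ℂ)) = (((1/2:ℝ) ^ (-a) : ℝ) : ℂ) by
    rw [Complex.ofReal_cpow (by norm_num), Complex.ofReal_neg]]
  rw [hGa]
  rw [show (((1/2:ℝ)^a / Real.Gamma a : ℝ) : ℂ) * (((Real.Gamma a : ℝ):ℂ) *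
      ((((1/2:ℝ) ^ (-a) : ℝ):ℂ) * (1 - 2*Complex.I*s) ^ (-(a:ℂ))))
      = ((((1/2:ℝ)^a / Real.Gamma a * Real.Gamma a * (1/2:ℝ)^(-a) : ℝ)):ℂ) *
        (1 - 2*Complex.I*s) ^ (-(a:ℂ)) by push_cast; ring]
  rw [show ((1/2:ℝ)^a / Real.Gamma a * Real.Gamma a * (1/2:ℝ)^(-a) : ℝ) = 1 by
    rw [div_mul_cancel₀ _ hGne, ← Real.rpow_add (by norm_num)]
    simp]
  rw [Complex.ofReal_one, one_mul]


/-- Let `Z ∼ N(0,1)` and, independently, `Γ ∼ χ²_{ℓ-1}` (the Gamma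
distribution with shape `(ℓ-1)/2` and rate `1/2`); set `χ = (Γ - (ℓ-1))/√(2(ℓ-1))` and
`S = √(1 - r²) Z + r χ`. Then for every `t ∈ ℝ` the characteristic function of `S` equals
`exp(-(1 - r²)t²/2) ⬝ exp(-itr√((ℓ-1)/2)) ⬝ (1 - itr√(2/(ℓ-1)))^{-(ℓ-1)/2}`,
the complex power being the principal branch. -/
theorem statement2
    {Ω : Type*} [MeasureSpace Ω] [IsProbabilityMeasure (ℙ : Measure Ω)]
    (ℓ : ℕ) (hℓ : 2 ≤ ℓ) (r : ℝ) (hr : r ^ 2 ≤ 1)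
    (Z G : Ω → ℝ) (hZmeas : Measurable Z) (hGmeas : Measurable G)
    (hZ : Measure.map Z ℙ = gaussianReal 0 1)
    (hG : Measure.map G ℙ = gammaMeasure (((ℓ : ℝ) - 1) / 2) (1 / 2))
    (hindep : IndepFun Z G ℙ)
    (χ S : Ω → ℝ)
    (hχ : ∀ ω, χ ω = (G ω - ((ℓ : ℝ) - 1)) / Real.sqrt (2 * ((ℓ : ℝ) - 1)))
    (hS : ∀ ω, S ω = Real.sqrt (1 - r ^ 2) * Z ω + r * χ ω) :
    ∀ t : ℝ,
      (∫ ω, Complex.exp (Complex.I * (t : ℂ) * (S ω : ℂ)) ∂ℙ) =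
        Complex.exp (-(1 - (r : ℂ) ^ 2) * (t : ℂ) ^ 2 / 2) *
          Complex.exp (-Complex.I * (t : ℂ) * (r : ℂ) *
            (Real.sqrt (((ℓ : ℝ) - 1) / 2) : ℂ)) *
          (1 - Complex.I * (t : ℂ) * (r : ℂ) * (Real.sqrt (2 / ((ℓ : ℝ) - 1)) : ℂ)) ^
            (-(((ℓ : ℕ) : ℂ) - 1) / 2) := by
  intro t
  set L : ℝ := (ℓ : ℝ) - 1 with hLdef
  have hL : 0 < L := by
    have : (2:ℝ) ≤ (ℓ:ℝ) := by exact_mod_cast hℓ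
    simp only [hLdef]; linarith
  have hr2 : (0:ℝ) ≤ 1 - r ^ 2 := by linarith
  set u : ℝ := t * Real.sqrt (1 - r ^ 2) with hu
  set s : ℝ := t * r / Real.sqrt (2 * L) with hs
  have hcpos : 0 < Real.sqrt (2 * L) := Real.sqrt_pos.2 (by linarith)
  have hcC : ((Real.sqrt (2 * L) : ℝ) : ℂ) ≠ 0 := by
    exact_mod_cast Complex.ofReal_ne_zero.2 hcpos.ne'
  -- key real identities
  have hprod1 : Real.sqrt (L / 2) * Real.sqrt (2 * L) = L := by
    rw [← Real.sqrt_mul (by positivity), show L / 2 * (2 * L) = L ^ 2 by ring,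
      Real.sqrt_sq hL.le]
  have hprod2 : Real.sqrt (2 / L) * Real.sqrt (2 * L) = 2 := by
    rw [← Real.sqrt_mul (by positivity), show 2 / L * (2 * L) = 2 ^ 2 by
      field_simp, Real.sqrt_sq (by norm_num)]
  have hmc : L / Real.sqrt (2 * L) = Real.sqrt (L / 2) := by
    rw [div_eq_iff hcpos.ne', hprod1]
  have h2s : 2 * s = t * r * Real.sqrt (2 / L) := by
    rw [hs, eq_comm, mul_comm (2:ℝ) _, div_mul_eq_mul_div, eq_div_iff hcpos.ne',
      mul_assoc, hprod2]
  -- split the integrand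
  have harg : ∀ ω, Complex.I * (t:ℂ) * (S ω : ℂ)
      = (-Complex.I * t * r * ((Real.sqrt (L / 2) : ℝ) : ℂ))
        + (Complex.I * u * (Z ω : ℂ) + Complex.I * s * (G ω : ℂ)) := by
    intro ω
    rw [hS, hχ]
    have hmcC : ((L:ℝ):ℂ) / ((Real.sqrt (2*L):ℝ):ℂ) = ((Real.sqrt (L/2) : ℝ):ℂ) := by
      exact_mod_cast congrArg (fun x : ℝ => (x : ℂ)) hmc
    rw [hu, hs]
    push_cast
    linear_combination (-(Complex.I * (t:ℂ) * (r:ℂ))) * hmcC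
  simp_rw [harg, Complex.exp_add, integral_const_mul]
  have hpair : Measurable fun ω => (Z ω, G ω) := hZmeas.prodMk hGmeas
  have hcont : Continuous fun p : ℝ × ℝ =>
      Complex.exp (Complex.I * u * (p.1 : ℂ)) * Complex.exp (Complex.I * s * (p.2 : ℂ)) := by
    fun_prop
  have hmap : Measure.map (fun ω => (Z ω, G ω)) ℙ
      = (gaussianReal 0 1).prod (gammaMeasure (L/2) (1/2)) := by
    rw [← hZ, ← hG]
    exact (indepFun_iff_map_prod_eq_prod_map_map hZmeas.aemeasurable hGmeas.aemeasurable).1 hindep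
  haveI : IsProbabilityMeasure (gammaMeasure (L/2) (1/2)) :=
    isProbabilityMeasure_gammaMeasure (by positivity) (by norm_num)
  have hint : ∫ ω, Complex.exp (Complex.I * u * (Z ω : ℂ)) *
        Complex.exp (Complex.I * s * (G ω : ℂ)) ∂ℙ
      = (∫ x : ℝ, Complex.exp (Complex.I * u * (x : ℂ)) ∂(gaussianReal 0 1)) *
        ∫ x : ℝ, Complex.exp (Complex.I * s * (x : ℂ)) ∂(gammaMeasure (L/2) (1/2)) := by
    have hmapped := integral_map (φ := fun ω => (Z ω, G ω)) (μ := ℙ)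
      hpair.aemeasurable hcont.aestronglyMeasurable
    rw [hmap] at hmapped
    calc ∫ ω, Complex.exp (Complex.I * u * (Z ω : ℂ)) *
            Complex.exp (Complex.I * s * (G ω : ℂ)) ∂ℙ
        = ∫ p : ℝ × ℝ, Complex.exp (Complex.I * u * (p.1 : ℂ)) *
            Complex.exp (Complex.I * s * (p.2 : ℂ))
            ∂((gaussianReal 0 1).prod (gammaMeasure (L/2) (1/2))) := hmapped.symm
      _ = _ := integral_prod_mul (fun x : ℝ => Complex.exp (Complex.I * u * (x : ℂ)))
            (fun x : ℝ => Complex.exp (Complex.I * s * (x : ℂ)))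
  rw [hint, my_gaussChar u, my_gammaChar (by positivity : (0:ℝ) < L/2) s]
  have hsq : ((Real.sqrt (1 - r^2) : ℝ) : ℂ)^2 = 1 - (r:ℂ)^2 := by
    rw [← Complex.ofReal_pow, Real.sq_sqrt hr2]
    push_cast
    ring
  have hu2 : ((u : ℝ) : ℂ) ^ 2 = (1 - (r : ℂ) ^ 2) * (t : ℂ) ^ 2 := by
    rw [hu]
    push_cast
    linear_combination (t:ℂ)^2 * hsq
  have hbase : (1 - 2 * Complex.I * (s : ℂ))
      = 1 - Complex.I * (t : ℂ) * (r : ℂ) * ((Real.sqrt (2 / L) : ℝ) : ℂ) := by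
    have h := congrArg (fun x : ℝ => (x : ℂ)) h2s
    push_cast at h
    linear_combination (-Complex.I) * h
  have hexp : -(((L/2 : ℝ)) : ℂ) = -(((ℓ : ℕ) : ℂ) - 1) / 2 := by
    rw [hLdef]
    push_cast
    ring
  rw [hbase, hexp, hu2]
  ring

end
end

section
/- Since r² ≤ 1, the third and fourth moments of S satisfy |E[S³]| ≤ √(8/(ℓ−1)) and E[S⁴] ≤ 3 + 12/(ℓ−1). -/
open MeasureTheory ProbabilityTheory
open scoped ENNReal

open Real Set

lemma my_integral_wd {f : ℝ → ℝ} (hf : Measurable f) (h0 : ∀ x, 0 ≤ f x) (g : ℝ → ℝ) :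
    ∫ x, g x ∂(volume.withDensity fun x => ENNReal.ofReal (f x)) = ∫ x, f x * g x := by
  rw [show (fun x => ENNReal.ofReal (f x)) = (fun x => ((f x).toNNReal : ℝ≥0∞)) from rfl]
  rw [integral_withDensity_eq_integral_smul (f := fun x => (f x).toNNReal) hf.real_toNNReal g]
  congr 1; ext x
  simp [NNReal.smul_def, Real.coe_toNNReal _ (h0 x)]

lemma my_integrable_wd {f : ℝ → ℝ} (hf : Measurable f) (h0 : ∀ x, 0 ≤ f x) (g : ℝ → ℝ) :
    Integrable g (volume.withDensity fun x => ENNReal.ofReal (f x)) ↔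
      Integrable (fun x => f x * g x) volume := by
  rw [show (fun x => ENNReal.ofReal (f x)) = (fun x => ((f x).toNNReal : ℝ≥0∞)) from rfl]
  rw [integrable_withDensity_iff_integrable_smul (f := fun x => (f x).toNNReal) hf.real_toNNReal]
  constructor <;> intro h <;> refine h.congr (Filter.Eventually.of_forall fun x => ?_) <;>
    simp [NNReal.smul_def, Real.coe_toNNReal _ (h0 x)]

lemma my_gamma_aux {a r : ℝ} (ha : 0 < a) (hr : 0 < r) (n : ℕ) :
    (fun x => gammaPDFReal a r x * x ^ n) =ᵐ[volume]
      (Ioi (0:ℝ)).indicator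
        (fun x => (r ^ (a:ℝ) / Real.Gamma a) * (x ^ (a + n - 1 : ℝ) * rexp (-(r * x)))) := by
  have h0 : ({0} : Set ℝ) ∪ {x | x ≠ 0} = univ := by
    ext x; by_cases h : x = 0 <;> simp [h]
  filter_upwards [compl_mem_ae_iff.mpr (volume_singleton (a := (0:ℝ)))] with x hx
  simp only [mem_compl_iff, mem_singleton_iff] at hx
  rcases lt_or_gt_of_ne hx with h | h
  · rw [gammaPDFReal, if_neg (not_le.mpr h), indicator_of_notMem (by simpa using h.le)]
    ring
  · rw [gammaPDFReal, if_pos h.le, indicator_of_mem (mem_Ioi.mpr h)]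
    rw [← Real.rpow_natCast x n, show (a + (n:ℝ) - 1) = (a - 1) + (n:ℝ) by ring,
      Real.rpow_add h]
    ring

lemma my_gamma_ind_integrable {a r : ℝ} (ha : 0 < a) (hr : 0 < r) (n : ℕ) :
    Integrable ((Ioi (0:ℝ)).indicator
        (fun x => (r ^ (a:ℝ) / Real.Gamma a) * (x ^ (a + n - 1 : ℝ) * rexp (-(r * x))))) := by
  rw [integrable_indicator_iff measurableSet_Ioi]
  apply Integrable.const_mul
  have := (integrableOn_rpow_mul_exp_neg_mul_rpow (p := 1) (s := a + n - 1) (b := r)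
    (by linarith [Nat.cast_nonneg (α := ℝ) n]) zero_lt_one hr)
  refine this.congr_fun (fun x hx => ?_) measurableSet_Ioi
  simp only [Real.rpow_one, neg_mul]

lemma my_gamma_integrable {a r : ℝ} (ha : 0 < a) (hr : 0 < r) (n : ℕ) :
    Integrable (fun x : ℝ => x ^ n) (gammaMeasure a r) := by
  rw [gammaMeasure, show gammaPDF a r = fun x => ENNReal.ofReal (gammaPDFReal a r x) from rfl,
    my_integrable_wd (measurable_gammaPDFReal a r) (gammaPDFReal_nonneg ha hr)]
  exact (my_gamma_ind_integrable ha hr n).congr (my_gamma_aux ha hr n).symm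

lemma my_gamma_moment {a r : ℝ} (ha : 0 < a) (hr : 0 < r) (n : ℕ) :
    ∫ x, x ^ n ∂(gammaMeasure a r) = Real.Gamma (a + n) / (Real.Gamma a * r ^ n) := by
  rw [gammaMeasure, show gammaPDF a r = fun x => ENNReal.ofReal (gammaPDFReal a r x) from rfl,
    my_integral_wd (measurable_gammaPDFReal a r) (gammaPDFReal_nonneg ha hr),
    integral_congr_ae (my_gamma_aux ha hr n), integral_indicator measurableSet_Ioi,
    integral_const_mul, integral_rpow_mul_exp_neg_mul_Ioi (by positivity) hr]
  rw [div_rpow zero_le_one hr.le, one_rpow, Real.rpow_add hr, Real.rpow_natCast]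
  field_simp

lemma my_gauss_pdf (x : ℝ) : gaussianPDFReal 0 1 x = (√(2*π))⁻¹ * rexp (-2⁻¹ * x^2) := by
  simp only [gaussianPDFReal, NNReal.coe_one, mul_one, sub_zero]
  ring_nf

lemma my_gauss_integrable_vol (n : ℕ) :
    Integrable (fun x : ℝ => x ^ n * rexp (-2⁻¹ * x ^ 2)) := by
  have base := integrable_rpow_mul_exp_neg_mul_sq (b := 2⁻¹) (by norm_num) (s := (n:ℝ))
    (by have := Nat.cast_nonneg (α := ℝ) n; linarith)
  have he : (fun x : ℝ => x ^ ((n:ℝ)) * rexp (-2⁻¹ * x ^ 2)) =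
      fun x : ℝ => x ^ n * rexp (-2⁻¹ * x ^ 2) := by
    funext x; rw [Real.rpow_natCast]
  rwa [he] at base

lemma my_gauss_integrable (n : ℕ) : Integrable (fun x : ℝ => x ^ n) (gaussianReal 0 1) := by
  rw [gaussianReal_of_var_ne_zero 0 one_ne_zero,
    show gaussianPDF 0 1 = fun x => ENNReal.ofReal (gaussianPDFReal 0 1 x) from rfl,
    my_integrable_wd (measurable_gaussianPDFReal 0 1) (gaussianPDFReal_nonneg 0 1)]
  have he : (fun x : ℝ => (√(2*π))⁻¹ * (x ^ n * rexp (-2⁻¹ * x ^ 2))) =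
      fun x : ℝ => gaussianPDFReal 0 1 x * x ^ n := by
    funext x; rw [my_gauss_pdf]; ring
  rw [← he]
  exact (my_gauss_integrable_vol n).const_mul _

lemma my_J_split (n : ℕ) :
    ∫ x : ℝ, x ^ n * rexp (-2⁻¹ * x ^ 2) =
      (1 + (-1:ℝ)^n) * ∫ x in Ioi (0:ℝ), x ^ n * rexp (-2⁻¹ * x ^ 2) := by
  set f : ℝ → ℝ := fun x => x ^ n * rexp (-2⁻¹ * x ^ 2) with hf
  have hint := my_gauss_integrable_vol n
  rw [← intervalIntegral.integral_Iic_add_Ioi (hint.integrableOn) (hint.integrableOn)]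
  have h1 : (∫ x in Iic (0:ℝ), f x) = ∫ x in Ioi (0:ℝ), f (-x) := by
    rw [show (0:ℝ) = -0 from (neg_zero).symm] at *
    rw [← integral_comp_neg_Iic (0:ℝ) (fun x => f (-x))]
    simp
  rw [h1]
  have h2 : ∀ x : ℝ, f (-x) = (-1:ℝ)^n * f x := by
    intro x; simp only [hf]; rw [neg_pow]; ring_nf
  simp_rw [h2]
  rw [integral_const_mul]
  ring

lemma my_J_even (n : ℕ) :
    ∫ x in Ioi (0:ℝ), x ^ n * rexp (-2⁻¹ * x ^ 2) =
      (2:ℝ) ^ (((n:ℝ) + 1) / 2) * (1 / 2) * Real.Gamma (((n:ℝ) + 1) / 2) := by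
  have := integral_rpow_mul_exp_neg_mul_rpow (p := 2) (q := (n:ℝ)) (b := 2⁻¹)
    (by norm_num) (by have := Nat.cast_nonneg (α := ℝ) n; linarith) (by norm_num)
  rw [show ∫ x in Ioi (0:ℝ), x ^ n * rexp (-2⁻¹ * x ^ 2) =
      ∫ x in Ioi (0:ℝ), x ^ (n:ℝ) * rexp (-2⁻¹ * x ^ (2:ℝ)) from
    setIntegral_congr_fun measurableSet_Ioi (fun x hx => by
      rw [Real.rpow_natCast, show ((2:ℝ)) = ((2:ℕ):ℝ) from by norm_num,
        Real.rpow_natCast]), this]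
  rw [Real.inv_rpow (by norm_num), ← Real.rpow_neg (by norm_num),
    show -(-((n:ℝ) + 1) / 2) = ((n:ℝ) + 1) / 2 by ring]

lemma my_gauss_moment_eq (n : ℕ) :
    ∫ x, x ^ n ∂(gaussianReal 0 1) = (√(2*π))⁻¹ *
      ((1 + (-1:ℝ)^n) * ((2:ℝ) ^ (((n:ℝ)+1)/2) * (1/2) * Real.Gamma (((n:ℝ)+1)/2))) := by
  rw [gaussianReal_of_var_ne_zero 0 one_ne_zero,
    show gaussianPDF 0 1 = fun x => ENNReal.ofReal (gaussianPDFReal 0 1 x) from rfl,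
    my_integral_wd (measurable_gaussianPDFReal 0 1) (gaussianPDFReal_nonneg 0 1),
    show (∫ x, gaussianPDFReal 0 1 x * x ^ n) =
      ∫ x, (√(2*π))⁻¹ * (x ^ n * rexp (-2⁻¹ * x ^ 2)) from
        integral_congr_ae (Filter.Eventually.of_forall fun x => by
          simp only [my_gauss_pdf]; ring),
    integral_const_mul, my_J_split, my_J_even]

lemma my_sqrt2pi : √(2*π) = √2 * √π := Real.sqrt_mul (by norm_num) π

lemma my_sqrt2pi_pos : 0 < √2 * √π :=
  mul_pos (Real.sqrt_pos.mpr (by norm_num)) (Real.sqrt_pos.mpr Real.pi_pos)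

lemma my_Gamma32 : Real.Gamma (3/2) = √π / 2 := by
  rw [show (3/2:ℝ) = 1/2 + 1 by norm_num, Real.Gamma_add_one (by norm_num),
    Real.Gamma_one_half_eq]
  ring

lemma my_Gamma52 : Real.Gamma (5/2) = 3/4 * √π := by
  rw [show (5/2:ℝ) = 3/2 + 1 by norm_num, Real.Gamma_add_one (by norm_num), my_Gamma32]
  ring

lemma my_two_rpow_32 : (2:ℝ) ^ ((3:ℝ)/2) = 2 * √2 := by
  rw [show (3:ℝ)/2 = 1 + 1/2 by norm_num, Real.rpow_add (by norm_num), Real.rpow_one,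
    ← Real.sqrt_eq_rpow]

lemma my_two_rpow_52 : (2:ℝ) ^ ((5:ℝ)/2) = 4 * √2 := by
  rw [show (5:ℝ)/2 = 1 + (1 + 1/2) by norm_num, Real.rpow_add (by norm_num), Real.rpow_one,
    Real.rpow_add (by norm_num), Real.rpow_one, ← Real.sqrt_eq_rpow]
  ring

lemma my_gauss_m1 : ∫ x, x ^ 1 ∂(gaussianReal 0 1) = 0 := by
  rw [my_gauss_moment_eq]; norm_num

lemma my_gauss_m3 : ∫ x, x ^ 3 ∂(gaussianReal 0 1) = 0 := by
  rw [my_gauss_moment_eq]; norm_num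

lemma my_gauss_m2 : ∫ x, x ^ 2 ∂(gaussianReal 0 1) = 1 := by
  rw [my_gauss_moment_eq]
  rw [show (((2:ℕ):ℝ)+1)/2 = 3/2 by norm_num, show ((3:ℝ)/2) = (3/2 : ℝ) by norm_num,
    my_two_rpow_32, my_Gamma32, my_sqrt2pi]
  rw [show (1 + (-1:ℝ)^2) * (2 * √2 * (1/2) * (√π / 2)) = √2 * √π by ring]
  exact inv_mul_cancel₀ my_sqrt2pi_pos.ne'

lemma my_gauss_m4 : ∫ x, x ^ 4 ∂(gaussianReal 0 1) = 3 := by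
  rw [my_gauss_moment_eq]
  rw [show (((4:ℕ):ℝ)+1)/2 = 5/2 by norm_num, my_two_rpow_52, my_Gamma52, my_sqrt2pi]
  rw [show (1 + (-1:ℝ)^4) * (4 * √2 * (1/2) * (3/4 * √π)) = (√2 * √π) * 3 by ring,
    ← mul_assoc, inv_mul_cancel₀ my_sqrt2pi_pos.ne', one_mul]

lemma my_gamma_momhalf {a : ℝ} (ha : 0 < a) (n : ℕ) :
    ∫ x, x ^ n ∂(gammaMeasure a (1/2)) = 2 ^ n * (Real.Gamma (a + n) / Real.Gamma a) := by
  rw [my_gamma_moment ha (by norm_num)]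
  have hΓ : Real.Gamma a ≠ 0 := (Real.Gamma_pos_of_pos ha).ne'
  field_simp
  ring_nf
  rw [← mul_pow]; norm_num

lemma my_gamma_integrable_sub {a r : ℝ} (ha : 0 < a) (hr : 0 < r) (c : ℝ) (j : ℕ) :
    Integrable (fun x : ℝ => (x - c) ^ j) (gammaMeasure a r) := by
  have he : (fun x : ℝ => (x - c) ^ j) = fun x =>
      ∑ m ∈ Finset.range (j+1), x ^ m * ((-1) ^ (m + j) * c ^ (j - m) * (j.choose m : ℝ)) := by
    funext x; rw [sub_pow]; exact Finset.sum_congr rfl fun m _ => by ring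
  rw [he]
  exact integrable_finset_sum _ fun m _ => (my_gamma_integrable ha hr m).mul_const _

lemma my_Gamma_chain {a : ℝ} (ha : 0 < a) :
    Real.Gamma (a+1) = a * Real.Gamma a ∧
    Real.Gamma (a+2) = (a+1) * a * Real.Gamma a ∧
    Real.Gamma (a+3) = (a+2) * (a+1) * a * Real.Gamma a ∧
    Real.Gamma (a+4) = (a+3) * (a+2) * (a+1) * a * Real.Gamma a := by
  have h1 : Real.Gamma (a + 1) = a * Real.Gamma a := Real.Gamma_add_one ha.ne'
  have h2 : Real.Gamma (a + 2) = (a+1) * a * Real.Gamma a := by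
    rw [show a + 2 = (a+1) + 1 by ring, Real.Gamma_add_one (by positivity), h1]; ring
  have h3 : Real.Gamma (a + 3) = (a+2) * (a+1) * a * Real.Gamma a := by
    rw [show a + 3 = (a+2) + 1 by ring, Real.Gamma_add_one (by positivity), h2]; ring
  have h4 : Real.Gamma (a + 4) = (a+3) * (a+2) * (a+1) * a * Real.Gamma a := by
    rw [show a + 4 = (a+3) + 1 by ring, Real.Gamma_add_one (by positivity), h3]; ring
  exact ⟨h1, h2, h3, h4⟩

lemma my_gm1 {k : ℝ} (hk : 0 < k) : ∫ x, x ^ 1 ∂(gammaMeasure (k/2) (1/2)) = k := by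
  have ha : 0 < k/2 := by positivity
  have hΓ : Real.Gamma (k/2) ≠ 0 := (Real.Gamma_pos_of_pos ha).ne'
  rw [my_gamma_momhalf ha, show ((1:ℕ):ℝ) = 1 by norm_num, (my_Gamma_chain ha).1]
  field_simp

lemma my_gm2 {k : ℝ} (hk : 0 < k) :
    ∫ x, x ^ 2 ∂(gammaMeasure (k/2) (1/2)) = k * (k+2) := by
  have ha : 0 < k/2 := by positivity
  have hΓ : Real.Gamma (k/2) ≠ 0 := (Real.Gamma_pos_of_pos ha).ne'
  rw [my_gamma_momhalf ha, show ((2:ℕ):ℝ) = 2 by norm_num, (my_Gamma_chain ha).2.1]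
  field_simp

lemma my_gm3 {k : ℝ} (hk : 0 < k) :
    ∫ x, x ^ 3 ∂(gammaMeasure (k/2) (1/2)) = k * (k+2) * (k+4) := by
  have ha : 0 < k/2 := by positivity
  have hΓ : Real.Gamma (k/2) ≠ 0 := (Real.Gamma_pos_of_pos ha).ne'
  rw [my_gamma_momhalf ha, show ((3:ℕ):ℝ) = 3 by norm_num, (my_Gamma_chain ha).2.2.1]
  field_simp; ring

lemma my_gm4 {k : ℝ} (hk : 0 < k) :
    ∫ x, x ^ 4 ∂(gammaMeasure (k/2) (1/2)) = k * (k+2) * (k+4) * (k+6) := by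
  have ha : 0 < k/2 := by positivity
  have hΓ : Real.Gamma (k/2) ≠ 0 := (Real.Gamma_pos_of_pos ha).ne'
  rw [my_gamma_momhalf ha, show ((4:ℕ):ℝ) = 4 by norm_num, (my_Gamma_chain ha).2.2.2]
  field_simp; ring

lemma my_gw_all {k : ℝ} (hk : 0 < k) :
    (∫ x, (x - k) ^ 1 ∂(gammaMeasure (k/2) (1/2))) = 0 ∧
    (∫ x, (x - k) ^ 2 ∂(gammaMeasure (k/2) (1/2))) = 2*k ∧
    (∫ x, (x - k) ^ 3 ∂(gammaMeasure (k/2) (1/2))) = 8*k ∧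
    (∫ x, (x - k) ^ 4 ∂(gammaMeasure (k/2) (1/2))) = 12*k^2 + 48*k := by
  have ha : 0 < k/2 := by positivity
  haveI : IsProbabilityMeasure (gammaMeasure (k/2) (1/2)) :=
    isProbabilityMeasure_gammaMeasure ha (by norm_num)
  have h1 := my_gamma_integrable ha (by norm_num : (0:ℝ) < 1/2) 1
  have h2 := my_gamma_integrable ha (by norm_num : (0:ℝ) < 1/2) 2
  have h3 := my_gamma_integrable ha (by norm_num : (0:ℝ) < 1/2) 3
  have h4 := my_gamma_integrable ha (by norm_num : (0:ℝ) < 1/2) 4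
  set γ := gammaMeasure (k/2) (1/2)
  have i21 : Integrable (fun x : ℝ => x ^ 2 - (2*k) * x ^ 1) γ := h2.sub (h1.const_mul _)
  have i32 : Integrable (fun x : ℝ => x ^ 3 - (3*k) * x ^ 2) γ := h3.sub (h2.const_mul _)
  have i321 : Integrable (fun x : ℝ => x ^ 3 - (3*k) * x ^ 2 + (3*k^2) * x ^ 1) γ :=
    i32.add (h1.const_mul _)
  have i43 : Integrable (fun x : ℝ => x ^ 4 - (4*k) * x ^ 3) γ := h4.sub (h3.const_mul _)
  have i432 : Integrable (fun x : ℝ => x ^ 4 - (4*k) * x ^ 3 + (6*k^2) * x ^ 2) γ :=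
    i43.add (h2.const_mul _)
  have i4321 : Integrable (fun x : ℝ => x ^ 4 - (4*k) * x ^ 3 + (6*k^2) * x ^ 2
      - (4*k^3) * x ^ 1) γ := i432.sub (h1.const_mul _)
  refine ⟨?_, ?_, ?_, ?_⟩
  · rw [show (∫ x, (x - k) ^ 1 ∂γ) = ∫ x, (x ^ 1 - k) ∂γ from
      integral_congr_ae (Filter.Eventually.of_forall fun x => by ring),
      integral_sub h1 (integrable_const k), integral_const, my_gm1 hk]
    simp
  · rw [show (∫ x, (x - k) ^ 2 ∂γ) = ∫ x, (x ^ 2 - (2*k) * x ^ 1 + k^2) ∂γ from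
      integral_congr_ae (Filter.Eventually.of_forall fun x => by ring),
      integral_add i21 (integrable_const _),
      integral_sub h2 (h1.const_mul _), integral_const_mul, integral_const,
      my_gm1 hk, my_gm2 hk]
    simp only [probReal_univ, one_smul]
    ring
  · rw [show (∫ x, (x - k) ^ 3 ∂γ) = ∫ x, (x ^ 3 - (3*k) * x ^ 2 + (3*k^2) * x ^ 1 - k^3) ∂γ from
      integral_congr_ae (Filter.Eventually.of_forall fun x => by ring),
      integral_sub i321 (integrable_const _),
      integral_add i32 (h1.const_mul _),
      integral_sub h3 (h2.const_mul _), integral_const_mul, integral_const_mul, integral_const,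
      my_gm1 hk, my_gm2 hk, my_gm3 hk]
    simp only [probReal_univ, one_smul]
    ring
  · rw [show (∫ x, (x - k) ^ 4 ∂γ) =
        ∫ x, (x ^ 4 - (4*k) * x ^ 3 + (6*k^2) * x ^ 2 - (4*k^3) * x ^ 1 + k^4) ∂γ from
      integral_congr_ae (Filter.Eventually.of_forall fun x => by ring),
      integral_add i4321 (integrable_const _),
      integral_sub i432 (h1.const_mul _),
      integral_add i43 (h2.const_mul _),
      integral_sub h4 (h3.const_mul _), integral_const_mul, integral_const_mul,
      integral_const_mul, integral_const,
      my_gm1 hk, my_gm2 hk, my_gm3 hk, my_gm4 hk]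
    simp only [probReal_univ, one_smul]
    ring


set_option maxHeartbeats 1000000 in
/-- In the setting of the limit variable `S = √(1 - r²) Z + r χ` (with
`Z ∼ N(0,1)` independent of `Γ ∼ χ²_{ℓ-1}` and `χ = (Γ - (ℓ-1))/√(2(ℓ-1))`), since `r² ≤ 1`
the third and fourth moments satisfy `|E[S³]| ≤ √(8/(ℓ-1))` and `E[S⁴] ≤ 3 + 12/(ℓ-1)`. -/
theorem statement11
    {Ω : Type*} [MeasureSpace Ω] [IsProbabilityMeasure (ℙ : Measure Ω)]
    (ℓ : ℕ) (hℓ : 2 ≤ ℓ) (r : ℝ) (hr : r ^ 2 ≤ 1)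
    (Z G : Ω → ℝ) (hZmeas : Measurable Z) (hGmeas : Measurable G)
    (hZ : Measure.map Z ℙ = gaussianReal 0 1)
    (hG : Measure.map G ℙ = gammaMeasure (((ℓ : ℝ) - 1) / 2) (1 / 2))
    (hindep : IndepFun Z G ℙ)
    (χ S : Ω → ℝ)
    (hχ : ∀ ω, χ ω = (G ω - ((ℓ : ℝ) - 1)) / Real.sqrt (2 * ((ℓ : ℝ) - 1)))
    (hS : ∀ ω, S ω = Real.sqrt (1 - r ^ 2) * Z ω + r * χ ω) :
    |∫ ω, (S ω) ^ 3 ∂ℙ| ≤ Real.sqrt (8 / ((ℓ : ℝ) - 1)) ∧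
      (∫ ω, (S ω) ^ 4 ∂ℙ) ≤ 3 + 12 / ((ℓ : ℝ) - 1) := by
  have hk1 : (1:ℝ) ≤ (ℓ:ℝ) - 1 := by
    have : (2:ℝ) ≤ (ℓ:ℝ) := by exact_mod_cast hℓ
    linarith
  set k : ℝ := (ℓ:ℝ) - 1 with hkdef
  have hk : 0 < k := by linarith
  have ha : 0 < k/2 := by positivity
  have hmZ : ∀ n : ℕ, Integrable (fun ω => Z ω ^ n) ℙ := by
    intro n
    have h := my_gauss_integrable n
    rw [← hZ] at h
    exact (integrable_map_measure (measurable_id.pow_const n).aestronglyMeasurable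
      hZmeas.aemeasurable).mp h
  have hiZ : ∀ n : ℕ, ∫ ω, Z ω ^ n ∂ℙ = ∫ x, x ^ n ∂(gaussianReal 0 1) := by
    intro n
    rw [← hZ]
    exact (integral_map hZmeas.aemeasurable
      (measurable_id.pow_const n).aestronglyMeasurable).symm
  have hmW : ∀ n : ℕ, Integrable (fun ω => (G ω - k) ^ n) ℙ := by
    intro n
    have h := my_gamma_integrable_sub ha (by norm_num : (0:ℝ) < 1/2) k n
    rw [← hG] at h
    exact (integrable_map_measure ((measurable_id.sub_const k).pow_const n).aestronglyMeasurable
      hGmeas.aemeasurable).mp h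
  have hiW : ∀ n : ℕ, ∫ ω, (G ω - k) ^ n ∂ℙ = ∫ x, (x - k) ^ n ∂(gammaMeasure (k/2) (1/2)) := by
    intro n
    rw [← hG]
    exact (integral_map hGmeas.aemeasurable
      ((measurable_id.sub_const k).pow_const n).aestronglyMeasurable).symm
  obtain ⟨gw1, gw2, gw3, gw4⟩ := my_gw_all hk
  have hindZW : ∀ i j : ℕ, IndepFun (fun ω => Z ω ^ i) (fun ω => (G ω - k) ^ j) ℙ := by
    intro i j
    exact hindep.comp (measurable_id.pow_const i) ((measurable_id.sub_const k).pow_const j)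
  have hmZW : ∀ i j : ℕ, Integrable (fun ω => Z ω ^ i * (G ω - k) ^ j) ℙ := by
    intro i j
    exact (hindZW i j).integrable_mul (hmZ i) (hmW j)
  have hiZW : ∀ i j : ℕ, ∫ ω, Z ω ^ i * (G ω - k) ^ j ∂ℙ
      = (∫ ω, Z ω ^ i ∂ℙ) * ∫ ω, (G ω - k) ^ j ∂ℙ := by
    intro i j
    exact (hindZW i j).integral_fun_mul_eq_mul_integral (hZmeas.pow_const i).aestronglyMeasurable
      ((hGmeas.sub_const k).pow_const j).aestronglyMeasurable
  have hz1 : ∫ ω, Z ω ^ 1 ∂ℙ = 0 := by rw [hiZ 1, my_gauss_m1]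
  have hz2 : ∫ ω, Z ω ^ 2 ∂ℙ = 1 := by rw [hiZ 2, my_gauss_m2]
  have hz3 : ∫ ω, Z ω ^ 3 ∂ℙ = 0 := by rw [hiZ 3, my_gauss_m3]
  have hz4 : ∫ ω, Z ω ^ 4 ∂ℙ = 3 := by rw [hiZ 4, my_gauss_m4]
  have hw1 : ∫ ω, (G ω - k) ^ 1 ∂ℙ = 0 := by rw [hiW 1]; exact gw1
  have hw2 : ∫ ω, (G ω - k) ^ 2 ∂ℙ = 2*k := by rw [hiW 2]; exact gw2
  have hw3 : ∫ ω, (G ω - k) ^ 3 ∂ℙ = 8*k := by rw [hiW 3]; exact gw3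
  have hw4 : ∫ ω, (G ω - k) ^ 4 ∂ℙ = 12*k^2 + 48*k := by rw [hiW 4]; exact gw4
  set c : ℝ := √(1 - r ^ 2) with hc
  have h1r : 0 ≤ 1 - r^2 := by linarith
  have hc2 : c ^ 2 = 1 - r ^ 2 := Real.sq_sqrt h1r
  set e : ℝ := √(2 * k) with hedef
  have he : 0 < e := Real.sqrt_pos.mpr (by linarith)
  have he2 : e ^ 2 = 2 * k := Real.sq_sqrt (by linarith)
  set d : ℝ := r / e with hd
  clear_value k c e d
  have hSS : ∀ ω, S ω = c * Z ω + d * (G ω - k) := by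
    intro ω; rw [hS ω, hχ ω, hd]; ring
  -- third moment
  have iA : Integrable (fun ω => c^3 * Z ω ^ 3) ℙ := (hmZ 3).const_mul _
  have iB : Integrable (fun ω => (3*c^2*d) * (Z ω ^ 2 * (G ω - k) ^ 1)) ℙ :=
    (hmZW 2 1).const_mul _
  have iC : Integrable (fun ω => (3*c*d^2) * (Z ω ^ 1 * (G ω - k) ^ 2)) ℙ :=
    (hmZW 1 2).const_mul _
  have iD : Integrable (fun ω => d^3 * (G ω - k) ^ 3) ℙ := (hmW 3).const_mul _
  have iAB : Integrable (fun ω => c^3 * Z ω ^ 3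
      + (3*c^2*d) * (Z ω ^ 2 * (G ω - k) ^ 1)) ℙ := iA.add iB
  have iABC : Integrable (fun ω => c^3 * Z ω ^ 3 + (3*c^2*d) * (Z ω ^ 2 * (G ω - k) ^ 1)
      + (3*c*d^2) * (Z ω ^ 1 * (G ω - k) ^ 2)) ℙ := iAB.add iC
  have h3val : ∫ ω, S ω ^ 3 ∂ℙ = d^3 * (8*k) := by
    rw [show (fun ω => S ω ^ 3) = fun ω => c^3 * Z ω ^ 3
        + (3*c^2*d) * (Z ω ^ 2 * (G ω - k) ^ 1)
        + (3*c*d^2) * (Z ω ^ 1 * (G ω - k) ^ 2)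
        + d^3 * (G ω - k) ^ 3 from funext fun ω => by rw [hSS ω]; ring]
    rw [integral_add iABC iD, integral_add iAB iC, integral_add iA iB,
      integral_const_mul, integral_const_mul, integral_const_mul, integral_const_mul,
      hiZW 2 1, hiZW 1 2, hz3, hz1, hw1, hw3]
    ring
  -- fourth moment
  have jA : Integrable (fun ω => c^4 * Z ω ^ 4) ℙ := (hmZ 4).const_mul _
  have jB : Integrable (fun ω => (4*c^3*d) * (Z ω ^ 3 * (G ω - k) ^ 1)) ℙ :=
    (hmZW 3 1).const_mul _
  have jC : Integrable (fun ω => (6*c^2*d^2) * (Z ω ^ 2 * (G ω - k) ^ 2)) ℙ :=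
    (hmZW 2 2).const_mul _
  have jD : Integrable (fun ω => (4*c*d^3) * (Z ω ^ 1 * (G ω - k) ^ 3)) ℙ :=
    (hmZW 1 3).const_mul _
  have jE : Integrable (fun ω => d^4 * (G ω - k) ^ 4) ℙ := (hmW 4).const_mul _
  have jAB : Integrable (fun ω => c^4 * Z ω ^ 4
      + (4*c^3*d) * (Z ω ^ 3 * (G ω - k) ^ 1)) ℙ := jA.add jB
  have jABC : Integrable (fun ω => c^4 * Z ω ^ 4 + (4*c^3*d) * (Z ω ^ 3 * (G ω - k) ^ 1)
      + (6*c^2*d^2) * (Z ω ^ 2 * (G ω - k) ^ 2)) ℙ := jAB.add jC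
  have jABCD : Integrable (fun ω => c^4 * Z ω ^ 4 + (4*c^3*d) * (Z ω ^ 3 * (G ω - k) ^ 1)
      + (6*c^2*d^2) * (Z ω ^ 2 * (G ω - k) ^ 2)
      + (4*c*d^3) * (Z ω ^ 1 * (G ω - k) ^ 3)) ℙ := jABC.add jD
  have h4val : ∫ ω, S ω ^ 4 ∂ℙ = 3*c^4 + (6*c^2*d^2) * (2*k) + d^4 * (12*k^2 + 48*k) := by
    rw [show (fun ω => S ω ^ 4) = fun ω => c^4 * Z ω ^ 4
        + (4*c^3*d) * (Z ω ^ 3 * (G ω - k) ^ 1)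
        + (6*c^2*d^2) * (Z ω ^ 2 * (G ω - k) ^ 2)
        + (4*c*d^3) * (Z ω ^ 1 * (G ω - k) ^ 3)
        + d^4 * (G ω - k) ^ 4 from funext fun ω => by rw [hSS ω]; ring]
    rw [integral_add jABCD jE, integral_add jABC jD, integral_add jAB jC, integral_add jA jB,
      integral_const_mul, integral_const_mul, integral_const_mul, integral_const_mul,
      integral_const_mul, hiZW 3 1, hiZW 2 2, hiZW 1 3, hz1, hz2, hz3, hz4, hw1, hw2, hw4]
    ring
  have habs : |r| ≤ 1 := by nlinarith [sq_abs r, abs_nonneg r]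
  constructor
  · rw [h3val]
    have hsq : √(8/k) = 4/e := by
      rw [show (8/k:ℝ) = (4/e)^2 from by rw [div_pow, he2]; field_simp; ring,
        Real.sqrt_sq (by positivity)]
    have he3 : e^3 = 2*k*e := by
      rw [pow_succ, he2]
    calc |d^3 * (8*k)| = |r|^3 * (4/e) := by
          rw [abs_mul, abs_pow, hd, abs_div, abs_of_pos he,
            abs_of_nonneg (by positivity : (0:ℝ) ≤ 8*k), div_pow]
          rw [he3]
          field_simp
          ring
      _ ≤ 1 * (4/e) := by
          apply mul_le_mul_of_nonneg_right _ (by positivity)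
          calc |r|^3 ≤ 1^3 := pow_le_pow_left₀ (abs_nonneg r) habs 3
            _ = 1 := one_pow 3
      _ = √(8/k) := by rw [hsq, one_mul]
  · rw [h4val]
    have hd2 : d^2 = r^2/(2*k) := by rw [hd, div_pow, he2]
    have hval : 3*c^4 + (6*c^2*d^2) * (2*k) + d^4 * (12*k^2 + 48*k) = 3 + 12*r^4/k := by
      rw [show c^4 = (c^2)^2 from by ring, show d^4 = (d^2)^2 from by ring, hc2, hd2]
      field_simp
      ring
    rw [hval]
    have h12 : 12 * r^4 ≤ 12 := by nlinarith [sq_nonneg (r^2), sq_nonneg r, hr]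
    have h12' : 12*r^4/k ≤ 12/k := by gcongr
    linarith
end

section
/- For W = exp(√β · Z) with Z standard Gaussian and β > 0, take ℓ = 2 and A = [1, ∞); then the parameter r = (E[W | W ∈ A] − E[W])/√(Var(W)) equals (2Φ(√β) − 1)/√(exp(β) − 1), and r → 0 as β → ∞. -/
set_option linter.unusedSectionVars false

open MeasureTheory ProbabilityTheory
open scoped ENNReal

lemma pdf_mul (t x : ℝ) :
    Real.exp (t * x) * gaussianPDFReal 0 1 x
      = Real.exp (t ^ 2 / 2) * gaussianPDFReal t 1 x := by
  simp only [gaussianPDFReal]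
  have h : ∀ a b c : ℝ, Real.exp a * (c * Real.exp b) = c * Real.exp (a + b) := by
    intro a b c; rw [mul_left_comm, ← Real.exp_add]
  rw [h, h]
  congr 1
  push_cast
  ring_nf

lemma gauss_meas_toReal {μ : ℝ} {s : Set ℝ} :
    ((gaussianReal μ 1) s).toReal = ∫ x in s, gaussianPDFReal μ 1 x := by
  rw [gaussianReal_apply_eq_integral μ one_ne_zero s, ENNReal.toReal_ofReal]
  exact setIntegral_nonneg_of_ae (Filter.Eventually.of_forall (fun x => gaussianPDFReal_nonneg μ 1 x))

lemma setint (t : ℝ) {s : Set ℝ} (hs : MeasurableSet s) :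
    ∫ x in s, Real.exp (t * x) ∂(gaussianReal 0 1)
      = Real.exp (t ^ 2 / 2) * ((gaussianReal t 1) s).toReal := by
  rw [gaussianReal_of_var_ne_zero 0 one_ne_zero]
  have hd : (gaussianPDF 0 1) = fun x => ((gaussianPDFReal 0 1 x).toNNReal : ℝ≥0∞) := by
    funext x; rfl
  rw [hd, setIntegral_withDensity_eq_setIntegral_smul
    (measurable_gaussianPDFReal 0 1).real_toNNReal _ hs]
  have : ∀ x, (gaussianPDFReal 0 1 x).toNNReal • Real.exp (t * x)
      = Real.exp (t ^ 2 / 2) * gaussianPDFReal t 1 x := by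
    intro x
    rw [NNReal.smul_def, Real.coe_toNNReal _ (gaussianPDFReal_nonneg 0 1 x)]
    rw [smul_eq_mul, mul_comm, pdf_mul]
  simp_rw [this]
  rw [integral_const_mul, gauss_meas_toReal]

lemma integ_exp (t : ℝ) : Integrable (fun x => Real.exp (t * x)) (gaussianReal 0 1) := by
  rw [gaussianReal_of_var_ne_zero 0 one_ne_zero]
  have hd : (gaussianPDF 0 1) = fun x => ((gaussianPDFReal 0 1 x).toNNReal : ℝ≥0∞) := by
    funext x; rfl
  rw [hd, integrable_withDensity_iff_integrable_smul
    (measurable_gaussianPDFReal 0 1).real_toNNReal]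
  have : ∀ x, (gaussianPDFReal 0 1 x).toNNReal • Real.exp (t * x)
      = Real.exp (t ^ 2 / 2) * gaussianPDFReal t 1 x := by
    intro x
    rw [NNReal.smul_def, Real.coe_toNNReal _ (gaussianPDFReal_nonneg 0 1 x)]
    rw [smul_eq_mul, mul_comm, pdf_mul]
  simp_rw [this]
  exact (integrable_gaussianPDFReal t 1).const_mul _

lemma map_neg_gauss : (gaussianReal 0 1).map (fun x => -1 * x) = gaussianReal 0 1 := by
  rw [gaussianReal_map_const_mul (-1)]
  norm_num
lemma gauss_Iic_eq_Ici_neg (t : ℝ) :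
    gaussianReal 0 1 (Set.Iic t) = gaussianReal 0 1 (Set.Ici (-t)) := by
  conv_lhs => rw [← map_neg_gauss]
  rw [Measure.map_apply (by fun_prop) measurableSet_Iic]
  congr 1
  ext x
  simp

lemma gauss_shift (t : ℝ) :
    gaussianReal t 1 (Set.Ici 0) = gaussianReal 0 1 (Set.Ici (-t)) := by
  have : (0 : ℝ) + t = t := by ring
  rw [← this, ← gaussianReal_map_add_const t,
    Measure.map_apply (by fun_prop) measurableSet_Ici]
  congr 1
  ext x
  simp

lemma gauss_Ici_zero : gaussianReal 0 1 (Set.Ici (0:ℝ)) = 1/2 := by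
  have h1 : gaussianReal 0 1 (Set.Iic (0:ℝ)) = gaussianReal 0 1 (Set.Ici (0:ℝ)) := by
    rw [gauss_Iic_eq_Ici_neg]; norm_num
  have h0 : gaussianReal 0 1 ({0} : Set ℝ) = 0 := by
    apply gaussianReal_absolutelyContinuous 0 one_ne_zero
    simp
  have hu : gaussianReal 0 1 (Set.Iic (0:ℝ) ∪ Set.Ici 0) = 1 := by
    rw [Set.Iic_union_Ici, measure_univ]
  have hi : gaussianReal 0 1 (Set.Iic (0:ℝ) ∩ Set.Ici 0) = 0 := by
    rw [Set.Iic_inter_Ici, Set.Icc_self]; exact h0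
  have key := measure_union_add_inter (μ := gaussianReal 0 1) (Set.Iic (0:ℝ)) (measurableSet_Ici (a := (0:ℝ)))
  rw [hu, hi, add_zero, h1, ← two_mul] at key
  have h2 : ((2:ℝ≥0∞))⁻¹ * (2 * gaussianReal 0 1 (Set.Ici (0:ℝ)))
      = (2:ℝ≥0∞)⁻¹ * 1 := by rw [← key]
  rw [← mul_assoc, ENNReal.inv_mul_cancel (by norm_num) (by norm_num), one_mul, mul_one] at h2
  rw [h2]
  norm_num

lemma gauss_Ici_eq_Iic (t : ℝ) :
    gaussianReal t 1 (Set.Ici 0) = gaussianReal 0 1 (Set.Iic t) := by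
  rw [gauss_shift, gauss_Iic_eq_Ici_neg]

lemma Phi_nonneg {t : ℝ} : 0 ≤ ((gaussianReal 0 1) (Set.Iic t)).toReal := ENNReal.toReal_nonneg

lemma Phi_le_one {t : ℝ} : ((gaussianReal 0 1) (Set.Iic t)).toReal ≤ 1 := by
  rw [show (1:ℝ) = (1:ℝ≥0∞).toReal by simp]
  exact ENNReal.toReal_mono ENNReal.one_ne_top prob_le_one

section Main
variable {Ω : Type*} [MeasureSpace Ω] [IsProbabilityMeasure (ℙ : Measure Ω)]
  (Z : Ω → ℝ) (hZmeas : Measurable Z) (hZ : Measure.map Z ℙ = gaussianReal 0 1)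

lemma integ_expZ (t : ℝ) (hZmeas : Measurable Z) (hZ : Measure.map Z ℙ = gaussianReal 0 1) :
    Integrable (fun ω => Real.exp (t * Z ω)) ℙ := by
  have h := integ_exp t
  rw [← hZ] at h
  exact (integrable_map_measure (h.aestronglyMeasurable)
    hZmeas.aemeasurable).mp h

lemma int_expZ (t : ℝ) (hZmeas : Measurable Z) (hZ : Measure.map Z ℙ = gaussianReal 0 1) :
    ∫ ω, Real.exp (t * Z ω) ∂ℙ = Real.exp (t ^ 2 / 2) := by
  have h : ∫ x, Real.exp (t * x) ∂(gaussianReal 0 1) = Real.exp (t ^ 2 / 2) := by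
    have := setint t (s := Set.univ) MeasurableSet.univ
    rw [Measure.restrict_univ] at this
    rw [this, measure_univ]
    simp
  rw [← h, ← hZ, integral_map hZmeas.aemeasurable]
  rw [hZ]
  exact (integ_exp t).aestronglyMeasurable

lemma setint_expZ (t : ℝ) (hZmeas : Measurable Z) (hZ : Measure.map Z ℙ = gaussianReal 0 1) :
    ∫ ω in Z ⁻¹' (Set.Ici 0), Real.exp (t * Z ω) ∂ℙ
      = Real.exp (t ^ 2 / 2) * ((gaussianReal 0 1) (Set.Iic t)).toReal := by
  have h := setint t (s := Set.Ici (0:ℝ)) measurableSet_Ici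
  rw [gauss_Ici_eq_Iic] at h
  rw [← h, ← hZ, setIntegral_map measurableSet_Ici _ hZmeas.aemeasurable]
  rw [hZ]
  exact (integ_exp t).aestronglyMeasurable

end Main

lemma sqrt_tendsto_atTop : Filter.Tendsto Real.sqrt Filter.atTop Filter.atTop := by
  apply Filter.tendsto_atTop_atTop_of_monotone (fun a b h => Real.sqrt_le_sqrt h)
  intro b
  exact ⟨(max b 0) ^ 2, by
    rw [Real.sqrt_sq (le_max_right _ _)]; exact le_max_left _ _⟩

/-- For `W = exp(√β Z)` with `Z ∼ N(0,1)` and `β > 0`, take `ℓ = 2` and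
`A = [1,∞)`; then `r = (E[W | W ∈ A] - E[W])/√(Var W) = (2Φ(√β) - 1)/√(exp(β) - 1)`, where
`Φ` is the standard Gaussian CDF, and `r → 0` as `β → ∞`. -/
theorem statement15
    {Ω : Type*} [MeasureSpace Ω] [IsProbabilityMeasure (ℙ : Measure Ω)]
    (Z : Ω → ℝ) (hZmeas : Measurable Z) (hZ : Measure.map Z ℙ = gaussianReal 0 1)
    (W : ℝ → Ω → ℝ) (hW : ∀ β ω, W β ω = Real.exp (Real.sqrt β * Z ω))
    (Φ : ℝ → ℝ) (hΦ : ∀ x, Φ x = ((gaussianReal 0 1) (Set.Iic x)).toReal)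
    (r : ℝ → ℝ)
    (hr : ∀ β, r β = ((∫ ω, W β ω ∂(ℙ[|{ω | 1 ≤ W β ω}])) - ∫ ω, W β ω ∂ℙ) /
      Real.sqrt (variance (W β) ℙ)) :
    (∀ β, 0 < β →
        r β = (2 * Φ (Real.sqrt β) - 1) / Real.sqrt (Real.exp β - 1)) ∧
      Filter.Tendsto r Filter.atTop (nhds 0) := by
  have key : ∀ β, 0 < β →
      r β = (2 * Φ (Real.sqrt β) - 1) / Real.sqrt (Real.exp β - 1) := by
    intro β hβ
    set t := Real.sqrt β with htdef
    have ht : 0 < t := Real.sqrt_pos.2 hβ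
    have ht2 : t ^ 2 = β := Real.sq_sqrt hβ.le
    -- the event
    have hA : {ω | 1 ≤ W β ω} = Z ⁻¹' (Set.Ici 0) := by
      ext ω
      simp only [Set.mem_setOf_eq, hW, Set.mem_preimage, Set.mem_Ici,
        Real.one_le_exp_iff]
      exact mul_nonneg_iff_of_pos_left ht
    -- probability of the event
    have hPA : ℙ (Z ⁻¹' (Set.Ici 0)) = 1/2 := by
      rw [← Measure.map_apply hZmeas measurableSet_Ici, hZ, gauss_Ici_zero]
    -- mean
    have hEW : ∫ ω, W β ω ∂ℙ = Real.exp (β/2) := by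
      simp_rw [hW]
      rw [int_expZ Z t hZmeas hZ, ht2]
    -- conditional mean
    have hcond : ∫ ω, W β ω ∂(ℙ[|{ω | 1 ≤ W β ω}])
        = 2 * (Real.exp (β/2) * Φ t) := by
      rw [hA, ProbabilityTheory.cond, integral_smul_measure, hPA]
      simp_rw [hW]
      rw [setint_expZ Z t hZmeas hZ, ht2, hΦ]
      norm_num
    -- variance
    have hsq : ∀ ω, (W β ω) ^ 2 = Real.exp ((2*t) * Z ω) := by
      intro ω
      rw [hW, sq, ← Real.exp_add, ← htdef]
      ring_nf
    have hmem : MemLp (W β) 2 ℙ := by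
      have hsm : AEStronglyMeasurable (W β) ℙ := by
        have : W β = fun ω => Real.exp (t * Z ω) := by funext ω; rw [hW]
        rw [this]
        exact ((Real.continuous_exp.comp (continuous_const.mul continuous_id)).measurable.comp
          hZmeas).aestronglyMeasurable
      rw [memLp_two_iff_integrable_sq hsm]
      have := integ_expZ Z (2*t) hZmeas hZ
      exact this.congr (Filter.Eventually.of_forall fun ω => (hsq ω).symm)
    have hvar : variance (W β) ℙ = Real.exp (2*β) - Real.exp β := by
      rw [variance_eq_sub hmem]
      simp only [Pi.pow_apply]
      simp_rw [hsq]
      rw [int_expZ Z (2*t) hZmeas hZ, hEW]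
      have hq : (2*t)^2/2 = 2*β := by rw [mul_pow, ht2]; ring
      rw [hq, sq, ← Real.exp_add]
      norm_num
    -- sqrt of variance
    have hsv : Real.sqrt (variance (W β) ℙ)
        = Real.exp (β/2) * Real.sqrt (Real.exp β - 1) := by
      rw [hvar]
      have : Real.exp (2*β) - Real.exp β = Real.exp β * (Real.exp β - 1) := by
        rw [mul_sub, ← Real.exp_add]; ring_nf
      rw [this, Real.sqrt_mul (Real.exp_nonneg β)]
      congr 1
      rw [show Real.exp β = (Real.exp (β/2))^2 by rw [sq, ← Real.exp_add]; ring_nf]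
      exact Real.sqrt_sq (Real.exp_nonneg _)
    -- put together
    rw [hr, hcond, hEW, hsv]
    have he : Real.exp (β/2) ≠ 0 := (Real.exp_pos _).ne'
    rw [show 2 * (Real.exp (β/2) * Φ t) - Real.exp (β/2)
        = Real.exp (β/2) * (2 * Φ t - 1) by ring]
    rw [mul_div_mul_left _ _ he]
  refine ⟨key, ?_⟩
  have hg : Filter.Tendsto (fun β => (Real.sqrt (Real.exp β - 1))⁻¹)
      Filter.atTop (nhds 0) := by
    apply Filter.Tendsto.inv_tendsto_atTop
    exact sqrt_tendsto_atTop.comp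
      ((Filter.tendsto_atTop_add_const_right _ (-1) Real.tendsto_exp_atTop).congr
        (fun x => by ring_nf))
  apply squeeze_zero_norm' _ hg
  filter_upwards [Filter.eventually_gt_atTop 0] with β hβ
  rw [key β hβ]
  have hΦ0 : 0 ≤ Φ (Real.sqrt β) := by rw [hΦ]; exact Phi_nonneg
  have hΦ1 : Φ (Real.sqrt β) ≤ 1 := by rw [hΦ]; exact Phi_le_one
  have hs : 0 ≤ Real.sqrt (Real.exp β - 1) := Real.sqrt_nonneg _
  rw [Real.norm_eq_abs, abs_div, abs_of_nonneg hs, div_eq_mul_inv]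
  have : |2 * Φ (Real.sqrt β) - 1| ≤ 1 := by
    rw [abs_le]; constructor <;> linarith
  calc |2 * Φ (Real.sqrt β) - 1| * (Real.sqrt (Real.exp β - 1))⁻¹
      ≤ 1 * (Real.sqrt (Real.exp β - 1))⁻¹ := by
        apply mul_le_mul_of_nonneg_right this (by positivity)
    _ = _ := one_mul _
end
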